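/- arXiv:1310.1112 — 5 statements merged into one kernel-verified Lean document; each statement's English description precedes it below -/
import Mathlib

section
/- Let d = (d_1, …, d_n) be a graphic list and let h be an extreme point of P(d). Then the graph R on vertex set {1,…,n} whose edges are exactly those pairs {i,j} with h_{ij} ∉ {0,1} is a disjoint union of cycles of odd length; that is, every vertex of {1,…,n} is incident to either zero or exactly two such pairs, and every connected component of R containing an edge is an odd cycle. -/
open Finset

/-- The polytope `P(d)` of fractional realizations: symmetric arrays with zero
diagonal, off-diagonal entries in `[0,1]`, whose row sums equal the degrees. -/
def degreePolytope {n : ℕ} (d : Fin n → ℕ) : Set (Fin n → Fin n → ℝ) :=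
  {x | (∀ i j, x i j = x j i) ∧ (∀ i, x i i = 0) ∧
       (∀ i j, 0 ≤ x i j ∧ x i j ≤ 1) ∧
       (∀ j, ∑ i, x i j = d j)}

/-- `G` is a realization of the degree list `d`. -/
def IsRealization {n : ℕ} (d : Fin n → ℕ) (G : SimpleGraph (Fin n)) : Prop :=
  ∀ i, {j | G.Adj i j}.ncard = d i

/-- `d` is graphic: it is the degree sequence of a simple graph. -/
def Graphic {n : ℕ} (d : Fin n → ℕ) : Prop :=
  ∃ G : SimpleGraph (Fin n), IsRealization d G

/-- `d` is decisive: every extreme point of `P(d)` has all coordinates in `{0,1}`. -/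
def Decisive {n : ℕ} (d : Fin n → ℕ) : Prop :=
  ∀ x ∈ Set.extremePoints ℝ (degreePolytope d), ∀ i j, x i j = 0 ∨ x i j = 1

/-- The graph whose edges are the pairs with nonintegral label. -/
def nonIntegralGraph {n : ℕ} (h : Fin n → Fin n → ℝ) : SimpleGraph (Fin n) :=
  SimpleGraph.fromRel fun i j => h i j ∉ ({0, 1} : Set ℝ)

/-- A `(3,3)`-blossom in `G`. -/
def Has33Blossom {V : Type*} (G : SimpleGraph V) : Prop :=
  ∃ v1 v2 v3 w1 w2 w3 : V,
    [v1, v2, v3, w1, w2, w3].Pairwise (· ≠ ·) ∧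
    ((G.Adj v1 v2 ∧ ¬G.Adj v2 v3 ∧ G.Adj v3 v1 ∧ ¬G.Adj v1 w1 ∧
      G.Adj w1 w2 ∧ ¬G.Adj w2 w3 ∧ G.Adj w3 w1) ∨
     (¬G.Adj v1 v2 ∧ G.Adj v2 v3 ∧ ¬G.Adj v3 v1 ∧ G.Adj v1 w1 ∧
      ¬G.Adj w1 w2 ∧ G.Adj w2 w3 ∧ ¬G.Adj w3 w1))

/-- A `(k,ℓ)`-blossom in `G`: cycles `v`, `w` with connecting pair `v 0, w 0`,
with the `k + ℓ + 1` pairs alternately edges and non-edges (phase `b`). -/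
def HasKLBlossom {V : Type*} (G : SimpleGraph V) (k l : ℕ) : Prop :=
  ∃ (v : ZMod k → V) (w : ZMod l → V) (b : Bool),
    Function.Injective (Sum.elim v w) ∧
    (∀ i : ZMod k, G.Adj (v i) (v (i + 1)) ↔ (Even i.val ↔ b = true)) ∧
    (G.Adj (v 0) (w 0) ↔ b = false) ∧
    (∀ i : ZMod l, G.Adj (w i) (w (i + 1)) ↔ (Even i.val ↔ b = true))

/-- The 24 forbidden degree multisets of the family `B`. -/
def BDegSeqs : Set (Multiset ℕ) :=
  {{1,1,1,1,1,1}, {2,2,1,1,1,1}, {2,2,2,2,1,1}, {2,2,2,2,2,2},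
   {3,2,2,1,1,1}, {3,2,2,2,2,1}, {3,3,2,2,1,1}, {3,3,2,2,2,2},
   {3,3,3,2,2,1}, {3,3,3,3,1,1}, {3,3,3,3,2,2}, {3,3,3,3,3,3},
   {4,2,2,2,1,1}, {4,3,2,2,2,1}, {4,3,3,2,2,2}, {4,3,3,3,2,1},
   {4,3,3,3,3,2}, {4,4,2,2,2,2}, {4,4,3,3,2,2}, {4,4,3,3,3,1},
   {4,4,3,3,3,3}, {4,4,4,3,3,2}, {4,4,4,4,3,3}, {4,4,4,4,4,4}}

/-- `G` is `B`-free: no six vertices induce a subgraph whose degree multiset is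
one of the 24 forbidden degree sequences (equivalently, no induced subgraph is
isomorphic to a member of `B`, since `B` consists of all realizations of them). -/
def BFree {V : Type*} (G : SimpleGraph V) : Prop :=
  ∀ s : Finset V, s.card = 6 →
    (s.val.map fun v => {u | u ∈ s ∧ G.Adj v u}.ncard) ∉ BDegSeqs

/-- `A` is an independent set in `G`. -/
def IndepOn {V : Type*} (G : SimpleGraph V) (A : Set V) : Prop :=
  ∀ a ∈ A, ∀ b ∈ A, ¬G.Adj a b

/-- `B` is a clique in `G`. -/
def CliqueOn {V : Type*} (G : SimpleGraph V) (B : Set V) : Prop :=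
  ∀ a ∈ B, ∀ b ∈ B, a ≠ b → G.Adj a b

/-- `G` is a split graph. -/
def IsSplit {V : Type*} (G : SimpleGraph V) : Prop :=
  ∃ A B : Set V, A ∪ B = Set.univ ∧ Disjoint A B ∧ IndepOn G A ∧ CliqueOn G B

/-- Partition of the vertices into an independent set `V1`, a clique `V2`, and a set
`V3` each of whose vertices is adjacent to all of `V2` and none of `V1`. -/
def GoodPartition {V : Type*} (G : SimpleGraph V) (V1 V2 V3 : Set V) : Prop :=
  V1 ∪ V2 ∪ V3 = Set.univ ∧ Disjoint V1 V2 ∧ Disjoint V1 V3 ∧ Disjoint V2 V3 ∧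
  IndepOn G V1 ∧ CliqueOn G V2 ∧
  (∀ v ∈ V3, ∀ u ∈ V2, G.Adj v u) ∧ (∀ v ∈ V3, ∀ u ∈ V1, ¬G.Adj v u)

/-- `G` is decomposable. -/
def Decomposable {V : Type*} (G : SimpleGraph V) : Prop :=
  ∃ V1 V2 V3 : Set V, GoodPartition G V1 V2 V3 ∧ (V1 ∪ V2).Nonempty ∧ V3.Nonempty

def Indecomposable {V : Type*} (G : SimpleGraph V) : Prop := ¬Decomposable G

/-- The graph `U`, the unique realization of `(4,2,2,2,2,2)`:
vertices `u=0, a=1, b=2, c=3, d=4, e=5`, edges `ua, ub, uc, ud, ea, eb, cd`. -/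
def graphU : SimpleGraph (Fin 6) :=
  SimpleGraph.fromRel fun i j =>
    (i, j) ∈ [((0 : Fin 6), (1 : Fin 6)), (0,2), (0,3), (0,4), (5,1), (5,2), (3,4)]

/-- `K_2 + K_{1,m}`: disjoint union of an edge and a star with `m` leaves
(star center `Sum.inr 0`). -/
def graphK2PlusStar (m : ℕ) : SimpleGraph (Fin 2 ⊕ Fin (m + 1)) :=
  SimpleGraph.fromRel fun x y =>
    (x = Sum.inl 0 ∧ y = Sum.inl 1) ∨
    (x = Sum.inr 0 ∧ ∃ j : Fin (m + 1), j ≠ 0 ∧ y = Sum.inr j)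

/-- `(K_m + K_1) ∨ 2K_1`: the join of (`K_m` plus an isolated vertex)
with two nonadjacent vertices. -/
def graphKmK1Join (m : ℕ) : SimpleGraph (Fin (m + 1) ⊕ Fin 2) :=
  SimpleGraph.fromRel fun x y =>
    (∃ i j : Fin (m + 1), (i : ℕ) < m ∧ (j : ℕ) < m ∧ i ≠ j ∧
      x = Sum.inl i ∧ y = Sum.inl j) ∨
    (∃ i : Fin (m + 1), ∃ j : Fin 2, x = Sum.inl i ∧ y = Sum.inr j)

/-- The 5-cycle `C_5`. -/
def graphC5 : SimpleGraph (Fin 5) :=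
  SimpleGraph.fromRel fun i j =>
    (i, j) ∈ [((0 : Fin 5), (1 : Fin 5)), (1,2), (2,3), (3,4), (4,0)]

/-- The path `P_5` on five vertices. -/
def graphP5 : SimpleGraph (Fin 5) :=
  SimpleGraph.fromRel fun i j =>
    (i, j) ∈ [((0 : Fin 5), (1 : Fin 5)), (1,2), (2,3), (3,4)]

/-- The house graph: the complement of `P_5`. -/
def graphHouse : SimpleGraph (Fin 5) := graphP5ᶜ

/-- `K_2 + K_3`: disjoint union of an edge and a triangle. -/
def graphK2PlusK3 : SimpleGraph (Fin 5) :=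
  SimpleGraph.fromRel fun i j =>
    (i, j) ∈ [((0 : Fin 5), (1 : Fin 5)), (2,3), (3,4), (4,2)]

/-- The complete bipartite graph `K_{2,3}` with parts `{0,1}` and `{2,3,4}`. -/
def graphK23 : SimpleGraph (Fin 5) :=
  SimpleGraph.fromRel fun i j =>
    (i, j) ∈ [((0 : Fin 5), (2 : Fin 5)), (0,3), (0,4), (1,2), (1,3), (1,4)]

/-- Condition (iii) of the structure theorem for the part `V3`. -/
def SpecialPart {V : Type*} (G : SimpleGraph V) (V3 : Set V) : Prop :=
  IsSplit (G.induce V3) ∨ V3.ncard < 6 ∨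
  Nonempty (G.induce V3 ≃g graphU) ∨ Nonempty (G.induce V3 ≃g graphUᶜ) ∨
  (∃ m, 3 ≤ m ∧ Nonempty (G.induce V3 ≃g graphK2PlusStar m)) ∨
  (∃ m, 3 ≤ m ∧ Nonempty (G.induce V3 ≃g graphKmK1Join m))

/-- The structure described in Theorem 4(4). -/
def HasGoodStructure {V : Type*} (G : SimpleGraph V) : Prop :=
  ∃ V1 V2 V3 : Set V, GoodPartition G V1 V2 V3 ∧ SpecialPart G V3

namespace OddCycleAux

open SimpleGraph Walk

noncomputable local instance {n : ℕ} {h : Fin n → Fin n → ℝ} :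
    DecidableRel (nonIntegralGraph h).Adj := Classical.decRel _

variable {n : ℕ} {d : Fin n → ℕ} {h : Fin n → Fin n → ℝ}

lemma adj_iff (hsym : ∀ i j, h i j = h j i) (hdiag : ∀ i, h i i = 0) {i j : Fin n} :
    (nonIntegralGraph h).Adj i j ↔ h i j ∉ ({0, 1} : Set ℝ) := by
  simp only [nonIntegralGraph, fromRel_adj]
  constructor
  · rintro ⟨hne, hc | hc⟩
    · exact hc
    · rwa [hsym i j]
  · intro hc
    refine ⟨?_, Or.inl hc⟩
    rintro rfl
    exact hc (by simp [hdiag i])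

lemma adj_bounds (hmem : h ∈ degreePolytope d) {i j : Fin n}
    (hadj : (nonIntegralGraph h).Adj i j) : 0 < h i j ∧ h i j < 1 := by
  obtain ⟨hsym, hdiag, hbd, -⟩ := hmem
  have := (adj_iff hsym hdiag).mp hadj
  simp only [Set.mem_insert_iff, Set.mem_singleton_iff, not_or] at this
  obtain ⟨h0, h1⟩ := this
  exact ⟨lt_of_le_of_ne (hbd i j).1 (Ne.symm h0), lt_of_le_of_ne (hbd i j).2 h1⟩

/-- The key perturbation lemma: at an extreme point, any symmetric "circulation"
supported on the fractional edges with zero vertex sums is zero. -/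
lemma perturb (hh : h ∈ Set.extremePoints ℝ (degreePolytope d))
    (g : Fin n → Fin n → ℝ) (hgs : ∀ i j, g i j = g j i)
    (hg0 : ∀ i j, ¬(nonIntegralGraph h).Adj i j → g i j = 0)
    (hgr : ∀ j, ∑ i, g i j = 0) : g = 0 := by
  classical
  obtain ⟨hP, hext⟩ := hh
  obtain ⟨hsym, hdiag, hbd, hsum⟩ := hP
  by_contra hg
  have hex : ∃ p : Fin n × Fin n, g p.1 p.2 ≠ 0 := by
    by_contra h'
    push_neg at h'
    exact hg (funext fun i => funext fun j => h' (i, j))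
  set S : Finset (Fin n × Fin n) := Finset.univ.filter (fun p => g p.1 p.2 ≠ 0) with hS
  have hSne : S.Nonempty := ⟨hex.choose, by simp [hS, hex.choose_spec]⟩
  have hadjS : ∀ p ∈ S, 0 < h p.1 p.2 ∧ h p.1 p.2 < 1 := by
    intro p hp
    have hgp : g p.1 p.2 ≠ 0 := by simpa [hS] using hp
    have hadj : (nonIntegralGraph h).Adj p.1 p.2 := by
      by_contra hc; exact hgp (hg0 _ _ hc)
    exact adj_bounds ⟨hsym, hdiag, hbd, hsum⟩ hadj
  set ε : ℝ := S.inf' hSne (fun p => min (h p.1 p.2) (1 - h p.1 p.2) / |g p.1 p.2|) with hε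
  have hεpos : 0 < ε := by
    rw [hε, Finset.lt_inf'_iff]
    intro p hp
    have h1 := hadjS p hp
    have hgp : g p.1 p.2 ≠ 0 := by simpa [hS] using hp
    exact div_pos (lt_min h1.1 (by linarith [h1.2])) (abs_pos.mpr hgp)
  have key : ∀ i j, g i j ≠ 0 → ε * |g i j| ≤ min (h i j) (1 - h i j) := by
    intro i j hgij
    have hmemS : (i, j) ∈ S := by simp [hS, hgij]
    have h1 : ε ≤ min (h i j) (1 - h i j) / |g i j| := Finset.inf'_le _ hmemS
    rw [le_div_iff₀ (abs_pos.mpr hgij)] at h1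
    linarith
  have habs : ∀ i j, |ε * g i j| ≤ min (h i j) (1 - h i j) ∨ g i j = 0 := by
    intro i j
    by_cases hgij : g i j = 0
    · exact Or.inr hgij
    · left
      rw [abs_mul, abs_of_pos hεpos]
      exact key i j hgij
  set x1 : Fin n → Fin n → ℝ := fun i j => h i j + ε * g i j with hx1
  set x2 : Fin n → Fin n → ℝ := fun i j => h i j - ε * g i j with hx2
  have hbounds : ∀ i j, (0 ≤ x1 i j ∧ x1 i j ≤ 1) ∧ (0 ≤ x2 i j ∧ x2 i j ≤ 1) := by
    intro i j
    rcases habs i j with hle | hzero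
    · have h1 := abs_le.mp hle
      have h2 : min (h i j) (1 - h i j) ≤ h i j := min_le_left _ _
      have h3 : min (h i j) (1 - h i j) ≤ 1 - h i j := min_le_right _ _
      constructor <;> constructor <;> simp only [hx1, hx2] <;> linarith
    · constructor <;> constructor <;> simp only [hx1, hx2, hzero, mul_zero] <;>
        first
        | linarith [(hbd i j).1, (hbd i j).2]
  have hx1mem : x1 ∈ degreePolytope d := by
    refine ⟨fun i j => by simp only [hx1]; rw [hsym i j, hgs i j],
      fun i => by simp only [hx1, hdiag i, hg0 i i (by simp), mul_zero, add_zero],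
      fun i j => (hbounds i j).1, fun j => ?_⟩
    simp only [hx1]
    rw [Finset.sum_add_distrib, ← Finset.mul_sum, hgr j, mul_zero, add_zero]
    exact hsum j
  have hx2mem : x2 ∈ degreePolytope d := by
    refine ⟨fun i j => by simp only [hx2]; rw [hsym i j, hgs i j],
      fun i => by simp only [hx2, hdiag i, hg0 i i (by simp), mul_zero, sub_zero],
      fun i j => (hbounds i j).2, fun j => ?_⟩
    simp only [hx2]
    rw [Finset.sum_sub_distrib, ← Finset.mul_sum, hgr j, mul_zero, sub_zero]
    exact hsum j
  have hseg : h ∈ openSegment ℝ x1 x2 := by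
    refine ⟨1/2, 1/2, by norm_num, by norm_num, by norm_num, ?_⟩
    funext i
    funext j
    simp only [Pi.add_apply, Pi.smul_apply, smul_eq_mul, hx1, hx2]
    ring
  have heq := hext hx1mem hx2mem hseg
  apply hg
  funext i
  funext j
  have := congrFun (congrFun heq i) j
  simp only [hx1, Pi.zero_apply] at this ⊢
  have hε0 : ε * g i j = 0 := by linarith
  rcases mul_eq_zero.mp hε0 with hc | hc
  · exact absurd hc hεpos.ne'
  · exact hc

lemma getVert_mem_support {V : Type*} {G : SimpleGraph V} {u v : V}
    (p : G.Walk u v) (i : ℕ) : p.getVert i ∈ p.support := by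
  induction p generalizing i with
  | nil => cases i <;> simp [Walk.getVert]
  | cons hadj q ih =>
    cases i with
    | zero => simp [Walk.getVert_zero]
    | succ i =>
      rw [Walk.getVert_cons_succ, Walk.support_cons]
      exact List.mem_cons_of_mem _ (ih i)

lemma path_getVert_inj {V : Type*} {G : SimpleGraph V} {u v : V} {p : G.Walk u v}
    (hp : p.IsPath) : ∀ {i j : ℕ}, i ≤ p.length → j ≤ p.length →
    p.getVert i = p.getVert j → i = j := by
  induction p with
  | nil => intro i j hi hj _; simp at hi hj; omega
  | cons hadj q ih =>
    obtain ⟨hq, hu⟩ := (Walk.cons_isPath_iff _ _).mp hp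
    intro i j hi hj hij
    rw [Walk.length_cons] at hi hj
    cases i with
    | zero =>
      cases j with
      | zero => rfl
      | succ j =>
        exfalso
        rw [Walk.getVert_zero, Walk.getVert_cons_succ] at hij
        exact hu (hij ▸ getVert_mem_support q j)
    | succ i =>
      cases j with
      | zero =>
        exfalso
        rw [Walk.getVert_zero, Walk.getVert_cons_succ] at hij
        exact hu (hij ▸ getVert_mem_support q i)
      | succ j =>
        rw [Walk.getVert_cons_succ, Walk.getVert_cons_succ] at hij
        have := ih hq (by omega) (by omega) hij
        omega

lemma cycle_getVert_inj {V : Type*} {G : SimpleGraph V} {v : V} {c : G.Walk v v}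
    (hc : c.IsCycle) {i j : ℕ} (hi : i < c.length) (hj : j < c.length)
    (hij : c.getVert i = c.getVert j) : i = j := by
  cases c with
  | nil => simp at hi
  | cons hadj q =>
    obtain ⟨hq, -⟩ := (Walk.cons_isCycle_iff _ _).mp hc
    rw [Walk.length_cons] at hi hj
    cases i with
    | zero =>
      cases j with
      | zero => rfl
      | succ j =>
        exfalso
        rw [Walk.getVert_zero, Walk.getVert_cons_succ] at hij
        have h1 : q.getVert j = q.getVert q.length := by
          rw [Walk.getVert_length]; exact hij.symm
        have := path_getVert_inj hq (by omega) le_rfl h1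
        omega
    | succ i =>
      cases j with
      | zero =>
        exfalso
        rw [Walk.getVert_zero, Walk.getVert_cons_succ] at hij
        have h1 : q.getVert i = q.getVert q.length := by
          rw [Walk.getVert_length]; exact hij
        have := path_getVert_inj hq (by omega) le_rfl h1
        omega
      | succ j =>
        rw [Walk.getVert_cons_succ, Walk.getVert_cons_succ] at hij
        have := path_getVert_inj hq (by omega) (by omega) hij
        omega

lemma no_deg_one (hmem : h ∈ degreePolytope d) (v : Fin n) :
    (nonIntegralGraph h).degree v ≠ 1 := by
  obtain ⟨hsym, hdiag, hbd, hsum⟩ := hmem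
  intro hdeg
  obtain ⟨w, hw⟩ := Finset.card_eq_one.mp hdeg
  have hadj_vw : (nonIntegralGraph h).Adj v w := by
    have : w ∈ (nonIntegralGraph h).neighborFinset v := by rw [hw]; simp
    exact (SimpleGraph.mem_neighborFinset _ _ _).mp this
  have hother : ∀ i : Fin n, i ≠ w → h i v = 0 ∨ h i v = 1 := by
    intro i hiw
    by_cases hiv : i = v
    · subst hiv; exact Or.inl (hdiag i)
    · have hnadj : ¬(nonIntegralGraph h).Adj v i := by
        intro hc
        have : i ∈ (nonIntegralGraph h).neighborFinset v :=
          (SimpleGraph.mem_neighborFinset _ _ _).mpr hc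
        rw [hw, Finset.mem_singleton] at this
        exact hiw this
      have hmem2 : h v i ∈ ({0, 1} : Set ℝ) := by
        by_contra hc
        exact hnadj ((adj_iff hsym hdiag).mpr hc)
      rw [hsym i v]
      simpa using hmem2
  have hsplit : h w v + ∑ i ∈ Finset.univ.erase w, h i v = ∑ i, h i v :=
    Finset.add_sum_erase _ (fun i => h i v) (Finset.mem_univ w)
  have hcount : ∑ i ∈ Finset.univ.erase w, h i v
      = (((Finset.univ.erase w)).filter (fun i => h i v = 1)).card := by
    have hterm : ∀ i ∈ Finset.univ.erase w, h i v = if h i v = 1 then (1:ℝ) else 0 := by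
      intro i hi
      rcases hother i (Finset.ne_of_mem_erase hi) with h0 | h1
      · rw [h0]; norm_num
      · rw [h1]; norm_num
    rw [Finset.sum_congr rfl hterm, Finset.sum_boole]
  set m := (((Finset.univ.erase w)).filter (fun i => h i v = 1)).card with hm
  have hwv : h w v = (d v : ℝ) - m := by
    rw [hsum v] at hsplit
    rw [hcount] at hsplit
    linarith
  have hb := adj_bounds ⟨hsym, hdiag, hbd, hsum⟩ hadj_vw
  rw [hsym w v] at hwv
  have hmlt : (m : ℝ) < d v := by linarith [hb.1]
  have hmlt' : m < d v := by exact_mod_cast hmlt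
  have : (m : ℝ) + 1 ≤ d v := by exact_mod_cast hmlt'
  linarith [hb.2]

variable (h) in
private noncomputable def gfun (y : ↥(nonIntegralGraph h).edgeFinset → ℝ) (i j : Fin n) : ℝ :=
  if hij : (nonIntegralGraph h).Adj i j then
    y ⟨s(i, j), by rw [SimpleGraph.mem_edgeFinset, SimpleGraph.mem_edgeSet]; exact hij⟩ else 0

lemma gfun_symm (y : ↥(nonIntegralGraph h).edgeFinset → ℝ) (i j : Fin n) :
    gfun h y i j = gfun h y j i := by
  unfold gfun
  by_cases hij : (nonIntegralGraph h).Adj i j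
  · rw [dif_pos hij, dif_pos hij.symm]
    congr 1
    exact Subtype.ext (Sym2.eq_swap)
  · rw [dif_neg hij, dif_neg (fun hji => hij hji.symm)]

variable (h) in
private noncomputable def Phi : (↥(nonIntegralGraph h).edgeFinset → ℝ) →ₗ[ℝ]
    (↥(Finset.univ.filter fun v : Fin n => 0 < (nonIntegralGraph h).degree v) → ℝ) where
  toFun y := fun v => ∑ i, gfun h y i v.1
  map_add' y z := by
    funext v
    simp only [Pi.add_apply, ← Finset.sum_add_distrib]
    refine Finset.sum_congr rfl fun i _ => ?_
    unfold gfun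
    split_ifs <;> simp
  map_smul' a y := by
    funext v
    simp only [RingHom.id_apply, Pi.smul_apply, smul_eq_mul, Finset.mul_sum]
    refine Finset.sum_congr rfl fun i _ => ?_
    unfold gfun
    split_ifs <;> simp

lemma degree_two_of_pos (hh : h ∈ Set.extremePoints ℝ (degreePolytope d)) :
    ∀ v : Fin n, 0 < (nonIntegralGraph h).degree v → (nonIntegralGraph h).degree v = 2 := by
  classical
  have hker : ∀ y, Phi h y = 0 → y = 0 := by
    intro y hy
    have hrowsum : ∀ j, ∑ i, gfun h y i j = 0 := by
      intro j
      by_cases hj : 0 < (nonIntegralGraph h).degree j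
      · have := congrFun hy ⟨j, by simp [hj]⟩
        simpa [Phi] using this
      · apply Finset.sum_eq_zero
        intro i _
        apply dif_neg
        intro hadj
        exact hj (Finset.card_pos.mpr ⟨i, (SimpleGraph.mem_neighborFinset _ _ _).mpr hadj.symm⟩)
    have hg := perturb hh (gfun h y) (gfun_symm y) (fun i j hn => dif_neg hn) hrowsum
    funext e
    obtain ⟨e, he⟩ := e
    induction e using Sym2.ind with
    | _ i j =>
      have hadj : (nonIntegralGraph h).Adj i j := by
        rwa [SimpleGraph.mem_edgeFinset, SimpleGraph.mem_edgeSet] at he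
      have h2 := congrFun (congrFun hg i) j
      rw [Pi.zero_apply, Pi.zero_apply] at h2
      unfold gfun at h2
      rw [dif_pos hadj] at h2
      simpa using h2
  have hinj : Function.Injective (Phi h) := by
    intro y z hyz
    have h1 : Phi h (y - z) = 0 := by rw [map_sub, hyz, sub_self]
    have h2 := hker _ h1
    rwa [sub_eq_zero] at h2
  have hcard := LinearMap.finrank_le_finrank_of_injective hinj
  rw [Module.finrank_fintype_fun_eq_card, Module.finrank_fintype_fun_eq_card,
    Fintype.card_coe, Fintype.card_coe] at hcard
  set V' := Finset.univ.filter (fun v : Fin n => 0 < (nonIntegralGraph h).degree v) with hV'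
  have hdegsum : ∑ v, (nonIntegralGraph h).degree v = 2 * (nonIntegralGraph h).edgeFinset.card :=
    (nonIntegralGraph h).sum_degrees_eq_twice_card_edges
  have hsplit : ∑ v ∈ V', (nonIntegralGraph h).degree v = ∑ v, (nonIntegralGraph h).degree v := by
    rw [← Finset.sum_filter_add_sum_filter_not Finset.univ
      (fun v => 0 < (nonIntegralGraph h).degree v) (fun v => (nonIntegralGraph h).degree v)]
    have hz : ∑ v ∈ Finset.univ.filter (fun v => ¬ 0 < (nonIntegralGraph h).degree v),
        (nonIntegralGraph h).degree v = 0 := by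
      apply Finset.sum_eq_zero
      intro v hv
      have := (Finset.mem_filter.mp hv).2
      omega
    rw [hz, add_zero]
  have hdeg2 : ∀ v ∈ V', 2 ≤ (nonIntegralGraph h).degree v := by
    intro v hv
    have h1 := (Finset.mem_filter.mp hv).2
    have h2 := no_deg_one hh.1 v
    omega
  have hge : 2 * V'.card ≤ ∑ v ∈ V', (nonIntegralGraph h).degree v := by
    calc 2 * V'.card = ∑ _v ∈ V', 2 := by rw [Finset.sum_const, smul_eq_mul]; ring
    _ ≤ _ := Finset.sum_le_sum hdeg2
  have heq : ∑ v ∈ V', (nonIntegralGraph h).degree v = ∑ _v ∈ V', 2 := by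
    have h2 : ∑ v ∈ V', (nonIntegralGraph h).degree v
        = 2 * (nonIntegralGraph h).edgeFinset.card := by rw [hsplit, hdegsum]
    rw [Finset.sum_const, smul_eq_mul]
    omega
  intro v hv
  by_contra hne
  have hvV' : v ∈ V' := by simp [hV', hv]
  have h3 : 2 < (nonIntegralGraph h).degree v := by
    have := no_deg_one hh.1 v
    omega
  have hlt : ∑ _v ∈ V', 2 < ∑ v ∈ V', (nonIntegralGraph h).degree v :=
    Finset.sum_lt_sum hdeg2 ⟨v, hvV', h3⟩
  omega
lemma no_even_cycle (hh : h ∈ Set.extremePoints ℝ (degreePolytope d)) {v : Fin n}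
    (c : (nonIntegralGraph h).Walk v v) (hc : c.IsCycle) : ¬ Even c.length := by
  intro heven
  classical
  have hL3 := hc.three_le_length
  set L := c.length with hL
  set g : Fin n → Fin n → ℝ := fun i j =>
    ∑ k ∈ Finset.range L,
      ((if c.getVert k = i ∧ c.getVert (k+1) = j then ((-1:ℝ))^k else 0) +
       (if c.getVert k = j ∧ c.getVert (k+1) = i then ((-1:ℝ))^k else 0)) with hg
  have hgsym : ∀ i j, g i j = g j i := fun i j => Finset.sum_congr rfl (fun k _ => add_comm _ _)
  have hgsupp : ∀ i j, ¬(nonIntegralGraph h).Adj i j → g i j = 0 := by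
    intro i j hnadj
    apply Finset.sum_eq_zero
    intro k hk
    rw [Finset.mem_range] at hk
    rw [if_neg, if_neg, add_zero]
    · rintro ⟨h1, h2⟩
      exact hnadj (by rw [← h1, ← h2]; exact (c.adj_getVert_succ hk).symm)
    · rintro ⟨h1, h2⟩
      exact hnadj (by rw [← h1, ← h2]; exact c.adj_getVert_succ hk)
  have hgrow : ∀ j, ∑ i, g i j = 0 := by
    intro j
    simp only [hg]
    rw [Finset.sum_comm]
    have hpt : ∀ k ∈ Finset.range L,
        (∑ i, ((if c.getVert k = i ∧ c.getVert (k+1) = j then ((-1:ℝ))^k else 0) +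
          (if c.getVert k = j ∧ c.getVert (k+1) = i then ((-1:ℝ))^k else 0)))
        = ((if c.getVert (k+1) = j then ((-1:ℝ))^k else 0) +
           (if c.getVert k = j then ((-1:ℝ))^k else 0)) := by
      intro k _
      rw [Finset.sum_add_distrib]
      congr 1
      · by_cases hQ : c.getVert (k+1) = j <;> simp [hQ, ite_and, Finset.sum_ite_eq]
      · by_cases hP : c.getVert k = j <;> simp [hP, ite_and, Finset.sum_ite_eq]
    rw [Finset.sum_congr rfl hpt, Finset.sum_add_distrib]
    have h1 : ∑ k ∈ Finset.range L, (if c.getVert (k+1) = j then ((-1:ℝ))^k else 0)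
        = -∑ k ∈ Finset.range L, (if c.getVert (k+1) = j then ((-1:ℝ))^(k+1) else 0) := by
      rw [← Finset.sum_neg_distrib]
      refine Finset.sum_congr rfl fun k _ => ?_
      by_cases hP : c.getVert (k+1) = j <;> simp [hP, pow_succ]
    have h2 : ∑ k ∈ Finset.range L, (if c.getVert (k+1) = j then ((-1:ℝ))^(k+1) else 0)
        = (∑ k ∈ Finset.range L, (if c.getVert k = j then ((-1:ℝ))^k else 0))
          + (if c.getVert L = j then ((-1:ℝ))^L else 0)
          - (if c.getVert 0 = j then ((-1:ℝ))^0 else 0) := by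
      have ha := Finset.sum_range_succ' (fun m => if c.getVert m = j then ((-1:ℝ))^m else 0) L
      have hb := Finset.sum_range_succ (fun m => if c.getVert m = j then ((-1:ℝ))^m else 0) L
      linarith
    rw [h1, h2]
    have hgv0 : c.getVert 0 = v := c.getVert_zero
    have hgvL : c.getVert L = v := c.getVert_length
    have hpow : ((-1:ℝ))^L = 1 := heven.neg_one_pow
    by_cases hvj : v = j <;> simp [hgv0, hgvL, hvj, hpow]
  have hzero := perturb hh g hgsym hgsupp hgrow
  have hadjvb : (nonIntegralGraph h).Adj v (c.getVert 1) := by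
    have := c.adj_getVert_succ (show 0 < L by omega)
    rwa [c.getVert_zero] at this
  have hone : g v (c.getVert 1) = 1 := by
    simp only [hg]
    rw [Finset.sum_eq_single_of_mem 0 (Finset.mem_range.mpr (by omega : (0:ℕ) < L))]
    · rw [if_pos ⟨c.getVert_zero, rfl⟩, if_neg, pow_zero, add_zero]
      rintro ⟨h1, -⟩
      exact hadjvb.ne (by rw [← h1, c.getVert_zero])
    · intro k hk hk0
      rw [Finset.mem_range] at hk
      rw [if_neg, if_neg, add_zero]
      · rintro ⟨h1, h2⟩
        by_cases hkL : k + 1 = L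
        · have hk1 : k = 1 := cycle_getVert_inj hc hk (by omega) h1
          omega
        · have : k + 1 = 0 := cycle_getVert_inj hc (by omega) (by omega)
            (by rw [h2, c.getVert_zero])
          omega
      · rintro ⟨h1, -⟩
        exact hk0 (cycle_getVert_inj hc hk (by omega) (by rw [h1, c.getVert_zero]))
  rw [hzero] at hone
  simp at hone

lemma start_mem_support_tail {V : Type*} {G : SimpleGraph V} {u : V}
    (p : G.Walk u u) (hp : p.length ≠ 0) : u ∈ p.support.tail := by
  cases p with
  | nil => simp at hp
  | cons h q => simpa using q.end_mem_support

lemma mem_support_iff_closed {V : Type*} {G : SimpleGraph V} {u : V}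
    (p : G.Walk u u) (hp : p.length ≠ 0) (x : V) :
    x ∈ p.support ↔ x ∈ p.support.tail := by
  constructor
  · intro hx
    rw [p.support_eq_cons] at hx
    rcases List.mem_cons.mp hx with rfl | hx2
    · exact start_mem_support_tail p hp
    · exact hx2
  · intro hx
    rw [p.support_eq_cons]
    exact List.mem_cons_of_mem _ hx

lemma closure (hd2 : ∀ a b : Fin n, (nonIntegralGraph h).Adj a b →
      (nonIntegralGraph h).degree a = 2)
    {v : Fin n} {c : (nonIntegralGraph h).Walk v v} (hc : c.IsCycle)
    {a z : Fin n} (ha : a ∈ c.support) (haz : (nonIntegralGraph h).Adj a z) :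
    z ∈ c.support := by
  classical
  set c' := c.rotate a ha with hc'def
  have hc' : c'.IsCycle := hc.rotate ha
  have hL3 : 3 ≤ c'.length := hc'.three_le_length
  have hL3' : 3 ≤ c.length := hc.three_le_length
  have hrot := Walk.support_rotate c a ha
  have hmemiff : ∀ x, (x ∈ c'.support ↔ x ∈ c.support) := by
    intro x
    rw [mem_support_iff_closed c' (by omega), mem_support_iff_closed c (by omega),
      hrot.mem_iff]
  have hadj1 : (nonIntegralGraph h).Adj a (c'.getVert 1) := by
    have := c'.adj_getVert_succ (show 0 < c'.length by omega)
    rwa [c'.getVert_zero] at this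
  have hadj2 : (nonIntegralGraph h).Adj a (c'.getVert (c'.length - 1)) := by
    have h1 := c'.adj_getVert_succ (show c'.length - 1 < c'.length by omega)
    have h2 : c'.length - 1 + 1 = c'.length := by omega
    rw [h2, c'.getVert_length] at h1
    exact h1.symm
  have hne : c'.getVert 1 ≠ c'.getVert (c'.length - 1) := by
    intro hcon
    have := cycle_getVert_inj hc' (show 1 < c'.length by omega)
      (show c'.length - 1 < c'.length by omega) hcon
    omega
  have hsub : ({c'.getVert 1, c'.getVert (c'.length - 1)} : Finset (Fin n))
      ⊆ (nonIntegralGraph h).neighborFinset a := by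
    intro t ht
    simp only [Finset.mem_insert, Finset.mem_singleton] at ht
    rcases ht with rfl | rfl
    · exact (SimpleGraph.mem_neighborFinset _ _ _).mpr hadj1
    · exact (SimpleGraph.mem_neighborFinset _ _ _).mpr hadj2
  have hcard2 : ({c'.getVert 1, c'.getVert (c'.length - 1)} : Finset (Fin n)).card = 2 := by
    rw [Finset.card_insert_of_notMem (by simp [hne]), Finset.card_singleton]
  have hdega : ((nonIntegralGraph h).neighborFinset a).card = 2 := hd2 a _ hadj1
  have heqnbr : ({c'.getVert 1, c'.getVert (c'.length - 1)} : Finset (Fin n))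
      = (nonIntegralGraph h).neighborFinset a :=
    Finset.eq_of_subset_of_card_le hsub (by omega)
  have hz : z ∈ ({c'.getVert 1, c'.getVert (c'.length - 1)} : Finset (Fin n)) := by
    rw [heqnbr]
    exact (SimpleGraph.mem_neighborFinset _ _ _).mpr haz
  simp only [Finset.mem_insert, Finset.mem_singleton] at hz
  rcases hz with rfl | rfl
  · exact (hmemiff _).mp (getVert_mem_support c' 1)
  · exact (hmemiff _).mp (getVert_mem_support c' (c'.length - 1))
lemma exists_cycle (hh : h ∈ Set.extremePoints ℝ (degreePolytope d))
    {v w : Fin n} (hvw : (nonIntegralGraph h).Adj v w) :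
    ∃ c : (nonIntegralGraph h).Walk v v, c.IsCycle ∧
      ∀ u, (nonIntegralGraph h).Reachable v u ↔ u ∈ c.support := by
  classical
  have hd2 : ∀ a b : Fin n, (nonIntegralGraph h).Adj a b →
      (nonIntegralGraph h).degree a = 2 := by
    intro a b hab
    exact degree_two_of_pos hh a
      (Finset.card_pos.mpr ⟨b, (SimpleGraph.mem_neighborFinset _ _ _).mpr hab⟩)
  have grow : ∀ (k : ℕ) (u : Fin n) (p : (nonIntegralGraph h).Walk u v), p.IsPath →
      0 < p.length → n ≤ p.length + k →
      ∃ (u' : Fin n) (p' : (nonIntegralGraph h).Walk u' v), p'.IsPath ∧ 0 < p'.length ∧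
        ∀ x, (nonIntegralGraph h).Adj u' x → x ∈ p'.support := by
    intro k
    induction k with
    | zero =>
      intro u p hp hl hn
      exfalso
      have := hp.length_lt
      rw [Fintype.card_fin] at this
      omega
    | succ k ih =>
      intro u p hp hl hn
      by_cases hterm : ∀ x, (nonIntegralGraph h).Adj u x → x ∈ p.support
      · exact ⟨u, p, hp, hl, hterm⟩
      · push_neg at hterm
        obtain ⟨x, hxadj, hxs⟩ := hterm
        exact ih x (Walk.cons hxadj.symm p) (hp.cons hxs) (by simp)
          (by rw [Walk.length_cons]; omega)
  obtain ⟨u, p, hp, hl, hterm⟩ := grow n w (Walk.cons hvw.symm Walk.nil)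
    (by simp [Walk.cons_isPath_iff, Walk.IsPath.nil, hvw.ne'])
    (by simp) (by simp)
  have hy_adj : (nonIntegralGraph h).Adj u (p.getVert 1) := by
    have := p.adj_getVert_succ hl
    rwa [p.getVert_zero] at this
  set y := p.getVert 1 with hy
  have hdegu : ((nonIntegralGraph h).neighborFinset u).card = 2 := hd2 u y hy_adj
  obtain ⟨z1, z2, hz12, hznbr⟩ := Finset.card_eq_two.mp hdegu
  have hymem : y ∈ ({z1, z2} : Finset (Fin n)) := by
    rw [← hznbr]
    exact (SimpleGraph.mem_neighborFinset _ _ _).mpr hy_adj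
  have hother : ∃ x, x ≠ y ∧ x ∈ ({z1, z2} : Finset (Fin n)) := by
    rcases Finset.mem_insert.mp hymem with h1 | h1
    · refine ⟨z2, ?_, by simp⟩
      rw [h1]
      exact hz12.symm
    · rw [Finset.mem_singleton] at h1
      refine ⟨z1, ?_, by simp⟩
      rw [h1]
      exact hz12
  have hAdj_uv : (nonIntegralGraph h).Adj u v := by
    by_contra hnuv
    obtain ⟨x, hxny, hxmem⟩ := hother
    have hxadj : (nonIntegralGraph h).Adj u x :=
      (SimpleGraph.mem_neighborFinset _ _ _).mp (by rw [hznbr]; exact hxmem)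
    have hxv : x ≠ v := fun hc => hnuv (hc ▸ hxadj)
    have hxu : x ≠ u := hxadj.ne'
    have hxs : x ∈ p.support := hterm x hxadj
    set q := p.takeUntil x hxs with hq'
    set r := p.dropUntil x hxs with hr'
    have hspec : q.append r = p := p.take_spec hxs
    have hqp : q.IsPath := hp.takeUntil hxs
    have hrp : r.IsPath := hp.dropUntil hxs
    have hnd : (q.support ++ r.support.tail).Nodup := by
      have := hp.support_nodup
      rwa [← hspec, Walk.support_append] at this
    have hdisj : ∀ z, z ∈ q.support → z ∈ r.support.tail → False := by
      intro z h1 h2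
      exact (List.disjoint_of_nodup_append hnd) h1 h2
    have hql : 0 < q.length := by
      rcases Nat.eq_zero_or_pos q.length with hc | hc
      · exact absurd (Walk.eq_of_length_eq_zero hc).symm hxu
      · exact hc
    have hrl : 0 < r.length := by
      rcases Nat.eq_zero_or_pos r.length with hc | hc
      · exact absurd (Walk.eq_of_length_eq_zero hc) hxv
      · exact hc
    set a := r.getVert 1 with ha'
    have haadj : (nonIntegralGraph h).Adj x a := by
      have := r.adj_getVert_succ hrl
      rwa [r.getVert_zero] at this
    have hatail : a ∈ r.support.tail := by
      have h1 : a ∈ r.support := getVert_mem_support r 1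
      rw [r.support_eq_cons] at h1
      rcases List.mem_cons.mp h1 with hcc | hcc
      · exact absurd hcc haadj.ne'
      · exact hcc
    set b := q.reverse.getVert 1 with hb'
    have hbadj : (nonIntegralGraph h).Adj x b := by
      have h2 : 0 < q.reverse.length := by rwa [Walk.length_reverse]
      have := q.reverse.adj_getVert_succ h2
      rwa [q.reverse.getVert_zero] at this
    have hbq : b ∈ q.support := by
      have := getVert_mem_support q.reverse 1
      rwa [Walk.support_reverse, List.mem_reverse] at this
    have hbu : b ≠ u := by
      intro hcc
      have h2 : q.reverse.getVert q.reverse.length = u := q.reverse.getVert_length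
      have h3 : (1:ℕ) = q.reverse.length :=
        path_getVert_inj hqp.reverse (by rw [Walk.length_reverse]; omega) le_rfl
          (by rw [h2]; exact hcc)
      have hq1 : q.length = 1 := by
        have := q.length_reverse
        omega
      have hpx : p.getVert 1 = x := by
        rw [← hspec, Walk.getVert_append, if_neg (by omega), hq1]
        exact r.getVert_zero
      exact hxny (by rw [← hpx, hy])
    have hau : a ≠ u := by
      intro hcc
      exact hdisj u q.start_mem_support (hcc ▸ hatail)
    have hab : a ≠ b := by
      intro hcc
      exact hdisj b hbq (hcc ▸ hatail)
    have hsub : ({u, a, b} : Finset (Fin n)) ⊆ (nonIntegralGraph h).neighborFinset x := by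
      intro t ht
      simp only [Finset.mem_insert, Finset.mem_singleton] at ht
      rcases ht with rfl | rfl | rfl
      · exact (SimpleGraph.mem_neighborFinset _ _ _).mpr hxadj.symm
      · exact (SimpleGraph.mem_neighborFinset _ _ _).mpr haadj
      · exact (SimpleGraph.mem_neighborFinset _ _ _).mpr hbadj
    have hcard3 : ({u, a, b} : Finset (Fin n)).card = 3 := by
      rw [Finset.card_insert_of_notMem (by simp [hau.symm, hbu.symm]),
        Finset.card_insert_of_notMem (by simp [hab]), Finset.card_singleton]
    have hdegx : ((nonIntegralGraph h).neighborFinset x).card = 2 := hd2 x u hxadj.symm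
    have := Finset.card_le_card hsub
    omega
  have hlen1 : p.length ≠ 1 := by
    intro hcc
    have hyv : y = v := by rw [hy, p.getVert_of_length_le (by omega)]
    obtain ⟨x, hxny, hxmem⟩ := hother
    have hxadj : (nonIntegralGraph h).Adj u x :=
      (SimpleGraph.mem_neighborFinset _ _ _).mp (by rw [hznbr]; exact hxmem)
    have hxs : x ∈ p.support := hterm x hxadj
    have hsl : p.support.length = 2 := by rw [Walk.length_support, hcc]
    have hxcases : x = u ∨ x ∈ p.support.tail := by
      rw [p.support_eq_cons] at hxs
      exact List.mem_cons.mp hxs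
    rcases hxcases with rfl | hxt
    · exact (nonIntegralGraph h).loopless.irrefl x hxadj
    · have hlt : p.support.tail.length = 1 := by
        rw [List.length_tail, hsl]
      obtain ⟨t, ht⟩ := List.length_eq_one_iff.mp hlt
      have hv_tail : v ∈ p.support.tail := by
        have hvs : v ∈ p.support := p.end_mem_support
        rw [p.support_eq_cons] at hvs
        rcases List.mem_cons.mp hvs with hc2 | hc2
        · exact absurd hc2.symm hAdj_uv.ne
        · exact hc2
      rw [ht] at hxt hv_tail
      simp only [List.mem_singleton] at hxt hv_tail
      exact hxny (by rw [hxt, ← hv_tail, hyv])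
  have hedge : s(v, u) ∉ p.edges := by
    intro hmem'
    cases p with
    | nil => exact (nonIntegralGraph h).loopless.irrefl v hAdj_uv
    | cons h1 p'' =>
      rw [Walk.edges_cons] at hmem'
      rcases List.mem_cons.mp hmem' with hcc | hcc
      · rw [Sym2.eq_iff] at hcc
        rcases hcc with ⟨hc1, hc2⟩ | ⟨hc1, hc2⟩
        · exact hAdj_uv.ne hc1.symm
        · apply hlen1
          subst hc1
          have hp'' : p''.IsPath := hp.of_cons
          rw [Walk.isPath_iff_eq_nil] at hp''
          rw [hp'']
          rfl
      · have hu_supp : u ∈ p''.support := Walk.snd_mem_support_of_mem_edges p'' hcc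
        exact ((Walk.cons_isPath_iff _ _).mp hp).2 hu_supp
  set c := Walk.cons hAdj_uv.symm p with hcdef
  have hcyc : c.IsCycle := by
    rw [hcdef, Walk.cons_isCycle_iff]
    exact ⟨hp, hedge⟩
  refine ⟨c, hcyc, ?_⟩
  have key : ∀ (a b : Fin n) (W : (nonIntegralGraph h).Walk a b),
      a ∈ c.support → b ∈ c.support := by
    intro a b W
    induction W with
    | nil => exact id
    | cons hadj W ih => exact fun ha => ih (closure hd2 hcyc ha hadj)
  intro t
  constructor
  · rintro ⟨W⟩
    exact key v t W c.start_mem_support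
  · intro ht
    exact ⟨c.takeUntil t ht⟩
lemma ncard_eq_degree (v : Fin n) :
    {w | (nonIntegralGraph h).Adj v w}.ncard = (nonIntegralGraph h).degree v := by
  have hset : {w | (nonIntegralGraph h).Adj v w}
      = ↑((nonIntegralGraph h).neighborFinset v) := by
    ext w
    simp [SimpleGraph.mem_neighborFinset]
  rw [hset, Set.ncard_coe_finset]
  rfl

lemma ncard_dichotomy (hh : h ∈ Set.extremePoints ℝ (degreePolytope d)) (v : Fin n) :
    {w | (nonIntegralGraph h).Adj v w}.ncard = 0 ∨
      {w | (nonIntegralGraph h).Adj v w}.ncard = 2 := by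
  rw [ncard_eq_degree]
  rcases Nat.eq_zero_or_pos ((nonIntegralGraph h).degree v) with h0 | hpos
  · exact Or.inl h0
  · exact Or.inr (degree_two_of_pos hh v hpos)

end OddCycleAux

/-- at an extreme point of `P(d)`, the nonintegrally-labeled pairs
form vertex-disjoint odd cycles: every vertex is incident to zero or exactly two
such pairs, and every connected component containing an edge is an odd cycle. -/
theorem extremePoint_nonintegral_edges_form_odd_cycles {n : ℕ} (d : Fin n → ℕ)
    (hd : Graphic d) (h : Fin n → Fin n → ℝ)
    (hh : h ∈ Set.extremePoints ℝ (degreePolytope d)) :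
    (∀ v, {w | (nonIntegralGraph h).Adj v w}.ncard = 0 ∨
          {w | (nonIntegralGraph h).Adj v w}.ncard = 2) ∧
    (∀ v w, (nonIntegralGraph h).Adj v w →
      ∃ c : (nonIntegralGraph h).Walk v v, c.IsCycle ∧ Odd c.length ∧
        ∀ u, (nonIntegralGraph h).Reachable v u ↔ u ∈ c.support) := by
  
  constructor
  · intro v
    exact OddCycleAux.ncard_dichotomy hh v
  · intro v w hvw
    obtain ⟨c, hcyc, hsupchar⟩ := OddCycleAux.exists_cycle hh hvw
    exact ⟨c, hcyc, Nat.not_even_iff_odd.mp (OddCycleAux.no_even_cycle hh c hcyc), hsupchar⟩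
end

section
/- Let d = (d_1, …, d_n) be a graphic list and let h be an extreme point of P(d). Then every coordinate of h that does not lie in {0,1} is equal to 1/2. -/
open Finset

/-- every nonintegral coordinate of an extreme point of `P(d)` equals `1/2`. -/
theorem extremePoint_nonintegral_coords_eq_half {n : ℕ} (d : Fin n → ℕ)
    (hd : Graphic d) (h : Fin n → Fin n → ℝ)
    (hh : h ∈ Set.extremePoints ℝ (degreePolytope d)) :
    ∀ i j, h i j ∉ ({0, 1} : Set ℝ) → h i j = 1 / 2 := by
  classical
  obtain ⟨⟨hsym, hdiag, hbound, hsum⟩, hext⟩ := hh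
  intro i0 j0 hij0
  set frac : Fin n → Fin n → Prop := fun a b => h a b ≠ 0 ∧ h a b ≠ 1 with hfrac_def
  have hfrac0 : frac i0 j0 := by
    constructor <;> intro hval <;> exact hij0 (by simp [hval])
  have fracsymm : ∀ a b, frac a b → frac b a := by
    rintro a b ⟨h1, h2⟩
    show h b a ≠ 0 ∧ h b a ≠ 1
    rw [hsym b a]; exact ⟨h1, h2⟩
  have fracne : ∀ a b, frac a b → a ≠ b := by
    rintro a b ⟨h1, _⟩ rfl; exact h1 (hdiag a)
  have fraclt : ∀ a b, frac a b → 0 < h a b ∧ h a b < 1 := by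
    rintro a b ⟨h1, h2⟩
    exact ⟨lt_of_le_of_ne (hbound a b).1 (Ne.symm h1), lt_of_le_of_ne (hbound a b).2 h2⟩
  -- Key A: no nonzero perturbation direction supported on fractional entries
  have keyA : ∀ y : Fin n → Fin n → ℝ, (∀ a b, y a b = y b a) →
      (∀ a b, y a b ≠ 0 → frac a b) → (∀ b, ∑ a, y a b = 0) → y = 0 := by
    intro y ysym ysupp ysum
    have hne : (Finset.univ : Finset (Fin n × Fin n)).Nonempty := ⟨(i0, j0), Finset.mem_univ _⟩
    set c : Fin n × Fin n → ℝ := fun p =>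
      if y p.1 p.2 = 0 then 1 else min (h p.1 p.2) (1 - h p.1 p.2) / |y p.1 p.2| with hc
    set ε := Finset.univ.inf' hne c with hε
    have hcpos : ∀ p : Fin n × Fin n, 0 < c p := by
      intro p
      by_cases hyp : y p.1 p.2 = 0
      · simp [hc, hyp]
      · have hf := fraclt _ _ (ysupp _ _ hyp)
        have hmin : 0 < min (h p.1 p.2) (1 - h p.1 p.2) := lt_min hf.1 (by linarith [hf.2])
        simp only [hc, if_neg hyp]
        exact div_pos hmin (abs_pos.mpr hyp)
    have hεpos : 0 < ε := by
      rw [hε, Finset.lt_inf'_iff]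
      exact fun p _ => hcpos p
    have hbd : ∀ a b, y a b ≠ 0 → |ε * y a b| ≤ min (h a b) (1 - h a b) := by
      intro a b hyab
      have hεle : ε ≤ c (a, b) := Finset.inf'_le _ (Finset.mem_univ _)
      rw [hc] at hεle
      simp only [if_neg hyab] at hεle
      rw [abs_mul, abs_of_pos hεpos]
      calc ε * |y a b| ≤ (min (h a b) (1 - h a b) / |y a b|) * |y a b| :=
            mul_le_mul_of_nonneg_right hεle (abs_nonneg _)
        _ = min (h a b) (1 - h a b) := div_mul_cancel₀ _ (abs_ne_zero.mpr hyab)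
    have hmem : ∀ t : ℝ, |t| ≤ ε → (fun a b => h a b + t * y a b) ∈ degreePolytope d := by
      intro t ht
      have htbd : ∀ a b, y a b ≠ 0 → |t * y a b| ≤ min (h a b) (1 - h a b) := by
        intro a b hyab
        refine le_trans ?_ (hbd a b hyab)
        rw [abs_mul, abs_mul]
        refine mul_le_mul_of_nonneg_right ?_ (abs_nonneg _)
        rwa [abs_of_pos hεpos]
      refine ⟨?_, ?_, ?_, ?_⟩
      · intro a b
        show h a b + t * y a b = h b a + t * y b a
        rw [hsym a b, ysym a b]
      · intro a
        have hya : y a a = 0 := by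
          by_contra hya
          exact (ysupp a a hya).1 (hdiag a)
        show h a a + t * y a a = 0
        simp [hya, hdiag a]
      · intro a b
        show 0 ≤ h a b + t * y a b ∧ h a b + t * y a b ≤ 1
        by_cases hyab : y a b = 0
        · simpa [hyab] using hbound a b
        · have hb := htbd a b hyab
          have hf := fraclt a b (ysupp a b hyab)
          have habs1 : |t * y a b| ≤ h a b := le_trans hb (min_le_left _ _)
          have habs2 : |t * y a b| ≤ 1 - h a b := le_trans hb (min_le_right _ _)
          constructor
          · linarith [neg_abs_le (t * y a b)]
          · linarith [le_abs_self (t * y a b)]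
      · intro b
        show (∑ a, (h a b + t * y a b)) = (d b : ℝ)
        have hdist : ∑ a, (h a b + t * y a b) = (∑ a, h a b) + t * ∑ a, y a b := by
          rw [Finset.sum_add_distrib, Finset.mul_sum]
        rw [hdist, ysum b, hsum b]; ring
    have m1 := hmem (-ε) (by rw [abs_neg, abs_of_pos hεpos])
    have m2 := hmem ε (by rw [abs_of_pos hεpos])
    have hseg : h ∈ openSegment ℝ (fun a b => h a b + (-ε) * y a b)
        (fun a b => h a b + ε * y a b) := by
      refine ⟨1/2, 1/2, by norm_num, by norm_num, by norm_num, ?_⟩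
      funext a b
      simp only [Pi.add_apply, Pi.smul_apply, smul_eq_mul]
      ring
    have h2 := hext m2 m1 (by rw [openSegment_symm]; exact hseg)
    funext a b
    have hab : h a b + ε * y a b = h a b := congrFun (congrFun h2 a) b
    have hεy : ε * y a b = 0 := by linarith
    have := mul_eq_zero.mp hεy
    simp only [Pi.zero_apply]
    rcases this with h' | h'
    · exact absurd h' (ne_of_gt hεpos)
    · exact h'
  -- fractional neighborhoods
  set T : Fin n → Finset (Fin n) := fun v => Finset.univ.filter (fun a => frac a v) with hT
  have rowInt : ∀ v, ∃ z : ℤ, ∑ a ∈ T v, h a v = z := by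
    intro v
    have hsplit := Finset.sum_filter_add_sum_filter_not Finset.univ
      (fun a => frac a v) (fun a => h a v)
    have hrest : ∑ a ∈ Finset.univ.filter (fun a => ¬ frac a v), h a v
        = (((Finset.univ.filter (fun a => ¬ frac a v)).filter (fun a => h a v = 1)).card : ℝ) := by
      rw [← Finset.sum_boole]
      refine Finset.sum_congr rfl ?_
      intro a ha
      simp only [Finset.mem_filter, hfrac_def] at ha
      rcases (not_and_or.mp ha.2) with h0 | h1
      · rw [not_not] at h0
        simp [h0]
      · rw [not_not] at h1
        simp [h1]
    refine ⟨(d v : ℤ) -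
      (((Finset.univ.filter (fun a => ¬ frac a v)).filter (fun a => h a v = 1)).card : ℤ), ?_⟩
    have := hsum v
    push_cast
    rw [← hrest]
    linarith [hsplit, this]
  -- the fractional edge set and vertex set
  set E : Finset (Fin n × Fin n) :=
    Finset.univ.filter (fun p => p.1 < p.2 ∧ frac p.1 p.2) with hE
  set S : Finset (Fin n) := Finset.univ.filter (fun v => ∃ a, frac a v) with hS
  set ex : ({p : Fin n × Fin n // p ∈ E} → ℝ) → (Fin n × Fin n → ℝ) :=
    fun x p => if hp : p ∈ E then x ⟨p, hp⟩ else 0 with hex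
  have ex_add : ∀ x x' p, ex (x + x') p = ex x p + ex x' p := by
    intro x x' p; rw [hex]; dsimp only; split <;> simp
  have ex_smul : ∀ (r : ℝ) x p, ex (r • x) p = r * ex x p := by
    intro r x p; rw [hex]; dsimp only; split <;> simp
  set L : ({p : Fin n × Fin n // p ∈ E} → ℝ) →ₗ[ℝ] ({v : Fin n // v ∈ S} → ℝ) :=
    { toFun := fun x v => ∑ a, (ex x (a, (v : Fin n)) + ex x ((v : Fin n), a)),
      map_add' := by
        intro x x'; funext v
        simp only [ex_add, Pi.add_apply]
        rw [← Finset.sum_add_distrib]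
        refine Finset.sum_congr rfl fun a _ => by ring,
      map_smul' := by
        intro r x; funext v
        simp only [ex_smul, RingHom.id_apply, Pi.smul_apply, smul_eq_mul, Finset.mul_sum]
        refine Finset.sum_congr rfl fun a _ => by ring } with hL
  have hLapp : ∀ x v, L x v = ∑ a, (ex x (a, (v : Fin n)) + ex x ((v : Fin n), a)) := by
    intro x v; rfl
  have hLinj : Function.Injective L := by
    rw [← LinearMap.ker_eq_bot, LinearMap.ker_eq_bot']
    intro x hx
    set y : Fin n → Fin n → ℝ := fun a b => ex x (a, b) + ex x (b, a) with hy
    have exmem : ∀ p, ex x p ≠ 0 → p ∈ E := by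
      intro p hp
      by_contra hpE
      rw [hex] at hp
      exact hp (dif_neg hpE)
    have hy0 : y = 0 := by
      apply keyA
      · intro a b; rw [hy]; dsimp only; ring
      · intro a b hyab
        by_contra hnf
        have e1 : ex x (a, b) = 0 := by
          by_contra he
          have := exmem _ he
          rw [hE, Finset.mem_filter] at this
          exact hnf this.2.2
        have e2 : ex x (b, a) = 0 := by
          by_contra he
          have := exmem _ he
          rw [hE, Finset.mem_filter] at this
          exact hnf (fracsymm _ _ this.2.2)
        rw [hy] at hyab; dsimp only at hyab
        rw [e1, e2] at hyab
        exact hyab (by ring)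
      · intro b
        by_cases hbS : b ∈ S
        · have := congrFun hx ⟨b, hbS⟩
          rw [hLapp] at this
          simpa using this
        · apply Finset.sum_eq_zero
          intro a _
          have e1 : ex x (a, b) = 0 := by
            by_contra he
            have := exmem _ he
            rw [hE, Finset.mem_filter] at this
            exact hbS (by rw [hS, Finset.mem_filter]; exact ⟨Finset.mem_univ _, a, this.2.2⟩)
          have e2 : ex x (b, a) = 0 := by
            by_contra he
            have := exmem _ he
            rw [hE, Finset.mem_filter] at this
            exact hbS (by
              rw [hS, Finset.mem_filter]
              exact ⟨Finset.mem_univ _, a, fracsymm _ _ this.2.2⟩)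
          rw [hy]; dsimp only; rw [e1, e2]; ring
    funext q
    obtain ⟨⟨a, b⟩, hq⟩ := q
    have hqE := hq
    rw [hE, Finset.mem_filter] at hqE
    have e1 : ex x (a, b) = x ⟨(a, b), hq⟩ := by rw [hex]; exact dif_pos hq
    have e2 : ex x (b, a) = 0 := by
      rw [hex]; refine dif_neg ?_
      rw [hE, Finset.mem_filter]
      rintro ⟨-, hlt, -⟩
      exact absurd hqE.2.1 (asymm hlt)
    have := congrFun (congrFun hy0 a) b
    rw [hy] at this; dsimp only at this
    rw [e1, e2] at this
    simpa using this
  -- |E| ≤ |S|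
  have hcard : E.card ≤ S.card := by
    have hfin := LinearMap.finrank_le_finrank_of_injective hLinj
    rwa [Module.finrank_fintype_fun_eq_card, Module.finrank_fintype_fun_eq_card,
      Fintype.card_coe, Fintype.card_coe] at hfin
  -- handshake
  have handshake : ∑ v, (T v).card = 2 * E.card := by
    have hTc : ∀ v, (T v).card = ∑ a, if frac a v then 1 else 0 := by
      intro v; rw [hT]; rw [Finset.card_filter]
    have hEc : E.card = ∑ a, ∑ b, if a < b ∧ frac a b then 1 else 0 := by
      rw [hE, Finset.card_filter, Fintype.sum_prod_type]
    simp only [hTc, hEc]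
    have split : ∀ a b : Fin n, (if frac a b then (1:ℕ) else 0) =
        (if a < b ∧ frac a b then 1 else 0) + (if b < a ∧ frac a b then 1 else 0) := by
      intro a b
      by_cases hf : frac a b
      · rcases lt_trichotomy a b with hlt | heq | hgt
        · simp [hf, hlt, asymm hlt]
        · exact absurd heq (fracne _ _ hf)
        · simp [hf, hgt, asymm hgt]
      · simp [hf]
    calc ∑ v, ∑ a, (if frac a v then (1:ℕ) else 0)
        = ∑ a, ∑ b, (if frac a b then (1:ℕ) else 0) := by rw [Finset.sum_comm]
      _ = ∑ a, ∑ b, ((if a < b ∧ frac a b then 1 else 0) + (if b < a ∧ frac a b then 1 else 0)) := by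
          refine Finset.sum_congr rfl fun a _ => Finset.sum_congr rfl fun b _ => split a b
      _ = (∑ a, ∑ b, if a < b ∧ frac a b then 1 else 0)
          + ∑ a, ∑ b, (if b < a ∧ frac a b then 1 else 0) := by
          rw [← Finset.sum_add_distrib]
          refine Finset.sum_congr rfl fun a _ => Finset.sum_add_distrib
      _ = 2 * ∑ a, ∑ b, (if a < b ∧ frac a b then 1 else 0) := by
          have : (∑ a, ∑ b, if b < a ∧ frac a b then (1:ℕ) else 0)
              = ∑ a, ∑ b, if a < b ∧ frac a b then 1 else 0 := by
            rw [Finset.sum_comm]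
            refine Finset.sum_congr rfl fun a _ => Finset.sum_congr rfl fun b _ => ?_
            congr 1
            simp only [eq_iff_iff]
            constructor
            · rintro ⟨hlt, hf⟩; exact ⟨hlt, fracsymm _ _ hf⟩
            · rintro ⟨hlt, hf⟩; exact ⟨hlt, fracsymm _ _ hf⟩
          rw [this]; ring
  -- degrees at least 2 on S
  have degge : ∀ v ∈ S, 2 ≤ (T v).card := by
    intro v hv
    rw [hS, Finset.mem_filter] at hv
    obtain ⟨-, a, ha⟩ := hv
    by_contra hlt
    push_neg at hlt
    have haT : a ∈ T v := by rw [hT]; exact Finset.mem_filter.mpr ⟨Finset.mem_univ _, ha⟩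
    have h1 : (T v).card = 1 := by
      have := Finset.card_pos.mpr ⟨a, haT⟩
      omega
    obtain ⟨b, hb⟩ := Finset.card_eq_one.mp h1
    obtain ⟨z, hz⟩ := rowInt v
    rw [hb, Finset.sum_singleton] at hz
    have hfb : frac b v := by
      have : b ∈ T v := hb ▸ Finset.mem_singleton_self b
      rw [hT] at this
      exact (Finset.mem_filter.mp this).2
    have hlt2 := fraclt b v hfb
    rw [hz] at hlt2
    have hz0 : (0:ℤ) < z := by exact_mod_cast hlt2.1
    have hz1 : z < 1 := by exact_mod_cast hlt2.2
    omega
  have Tout : ∀ v ∉ S, T v = ∅ := by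
    intro v hv
    rw [hT]
    refine Finset.filter_eq_empty_iff.mpr ?_
    intro a _
    intro hfa
    exact hv (by rw [hS, Finset.mem_filter]; exact ⟨Finset.mem_univ _, a, hfa⟩)
  have hsum2 : ∑ v ∈ S, (T v).card = ∑ v, (T v).card :=
    Finset.sum_subset (Finset.subset_univ S)
      (fun v _ hv => by rw [Tout v hv, Finset.card_empty])
  have hge : S.card ≤ E.card := by
    have h1 : ∑ v ∈ S, (2:ℕ) ≤ ∑ v ∈ S, (T v).card := Finset.sum_le_sum degge
    rw [Finset.sum_const, smul_eq_mul] at h1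
    rw [hsum2, handshake] at h1
    omega
  have degeq : ∀ v ∈ S, (T v).card = 2 := by
    have heq : ∑ v ∈ S, (2:ℕ) = ∑ v ∈ S, (T v).card := by
      rw [Finset.sum_const, smul_eq_mul, hsum2, handshake]
      omega
    intro v hv
    exact ((Finset.sum_eq_sum_iff_of_le degge).mp heq v hv).symm
  -- sums over fractional neighborhoods are 1
  have sumT1 : ∀ v ∈ S, ∑ a ∈ T v, h a v = 1 := by
    intro v hv
    obtain ⟨a, b, hab, hTv⟩ := Finset.card_eq_two.mp (degeq v hv)
    obtain ⟨z, hz⟩ := rowInt v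
    have hfa : frac a v := by
      have : a ∈ T v := hTv ▸ (by simp)
      rw [hT] at this; exact (Finset.mem_filter.mp this).2
    have hfb : frac b v := by
      have : b ∈ T v := hTv ▸ (by simp)
      rw [hT] at this; exact (Finset.mem_filter.mp this).2
    have la := fraclt a v hfa
    have lb := fraclt b v hfb
    rw [hTv, Finset.sum_pair hab] at hz ⊢
    have hz0 : (0:ℤ) < z := by
      have : (0:ℝ) < (z:ℝ) := by rw [← hz]; linarith [la.1, lb.1]
      exact_mod_cast this
    have hz2 : z < 2 := by
      have : (z:ℝ) < 2 := by rw [← hz]; linarith [la.2, lb.2]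
      exact_mod_cast this
    have : z = 1 := by omega
    rw [this] at hz
    simpa using hz
  -- the killer vector
  set xstar : ({p : Fin n × Fin n // p ∈ E} → ℝ) :=
    fun q => h (q : Fin n × Fin n).1 (q : Fin n × Fin n).2 - 1/2 with hxstar
  have hLx : L xstar = 0 := by
    funext v
    rw [hLapp]
    have hvS := v.2
    have hterm : ∀ a, ex xstar (a, (v : Fin n)) + ex xstar ((v : Fin n), a)
        = if frac a (v : Fin n) then h a (v : Fin n) - 1/2 else 0 := by
      intro a
      by_cases hf : frac a (v : Fin n)
      · rcases lt_trichotomy a (v : Fin n) with hlt | heq | hgt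
        · have hm1 : (a, (v : Fin n)) ∈ E := by
            rw [hE, Finset.mem_filter]; exact ⟨Finset.mem_univ _, hlt, hf⟩
          have hm2 : ((v : Fin n), a) ∉ E := by
            rw [hE, Finset.mem_filter]; rintro ⟨-, hlt2, -⟩; exact absurd hlt (asymm hlt2)
          rw [hex]; dsimp only
          rw [dif_pos hm1, dif_neg hm2, if_pos hf, hxstar]
          ring
        · exact absurd heq (fracne _ _ hf)
        · have hm1 : (a, (v : Fin n)) ∉ E := by
            rw [hE, Finset.mem_filter]; rintro ⟨-, hlt2, -⟩; exact absurd hgt (asymm hlt2)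
          have hm2 : ((v : Fin n), a) ∈ E := by
            rw [hE, Finset.mem_filter]
            exact ⟨Finset.mem_univ _, hgt, fracsymm _ _ hf⟩
          rw [hex]; dsimp only
          rw [dif_neg hm1, dif_pos hm2, if_pos hf, hxstar]
          dsimp only
          rw [hsym a (v : Fin n)]
          ring
      · have hm1 : (a, (v : Fin n)) ∉ E := by
          rw [hE, Finset.mem_filter]; rintro ⟨-, -, hf2⟩; exact hf hf2
        have hm2 : ((v : Fin n), a) ∉ E := by
          rw [hE, Finset.mem_filter]; rintro ⟨-, -, hf2⟩; exact hf (fracsymm _ _ hf2)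
        rw [hex]; dsimp only
        rw [dif_neg hm1, dif_neg hm2, if_neg hf]
        ring
    rw [Finset.sum_congr rfl fun a _ => hterm a]
    rw [← Finset.sum_filter]
    have hTv : Finset.univ.filter (fun a => frac a (v : Fin n)) = T (v : Fin n) := by rw [hT]
    rw [hTv, Finset.sum_sub_distrib, sumT1 _ hvS, Finset.sum_const, degeq _ hvS]
    norm_num
  have hx0 : xstar = 0 := hLinj (by rw [hLx, map_zero])
  -- extract the conclusion
  have hne0 := fracne _ _ hfrac0
  rcases lt_trichotomy i0 j0 with hlt | heq | hgt
  · have hm : (i0, j0) ∈ E := by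
      rw [hE, Finset.mem_filter]; exact ⟨Finset.mem_univ _, hlt, hfrac0⟩
    have := congrFun hx0 ⟨(i0, j0), hm⟩
    rw [hxstar] at this
    simp only [Pi.zero_apply] at this
    linarith [this]
  · exact absurd heq hne0
  · have hm : (j0, i0) ∈ E := by
      rw [hE, Finset.mem_filter]
      exact ⟨Finset.mem_univ _, hgt, fracsymm _ _ hfrac0⟩
    have := congrFun hx0 ⟨(j0, i0), hm⟩
    rw [hxstar] at this
    simp only [Pi.zero_apply] at this
    rw [hsym i0 j0]
    linarith [this]
end

section
/- Let d = (d_1, …, d_n) be a graphic list and let h be an extreme point of P(d). Then the graph on vertex set {1,…,n} whose edges are the pairs {i,j} with h_{ij} ∉ {0,1} (which is a disjoint union of odd cycles) has an even number of cycles; equivalently, the number of connected components of this graph containing at least one edge is even. -/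
open Finset

namespace OddCycleAux
variable {α : Type*}

noncomputable def seqP (nxt : α → α → α) (a b : α) : ℕ → α × α
  | 0 => (a, b)
  | (k+1) => ((seqP nxt a b k).2, nxt (seqP nxt a b k).1 (seqP nxt a b k).2)

noncomputable def sq (nxt : α → α → α) (a b : α) (k : ℕ) : α := (seqP nxt a b k).1

lemma seqP_eq (nxt : α → α → α) (a b : α) (k : ℕ) :
    seqP nxt a b k = (sq nxt a b k, sq nxt a b (k+1)) := by
  cases k with
  | zero => simp [seqP, sq]
  | succ k => simp [seqP, sq]

variable {R : α → α → Prop} {nxt : α → α → α} {a b : α}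

@[simp] lemma sq_zero : sq nxt a b 0 = a := rfl
@[simp] lemma sq_one : sq nxt a b 1 = b := rfl

lemma sq_step (k : ℕ) :
    sq nxt a b (k+2) = nxt (sq nxt a b k) (sq nxt a b (k+1)) := by
  have h1 : sq nxt a b (k+2) = (seqP nxt a b (k+1)).2 := by simp [sq, seqP]
  rw [h1, seqP, seqP_eq]

section Props
variable (hsym : ∀ u v, R u v → R v u)
variable (hirr : ∀ u, ¬ R u u)
variable (hn1 : ∀ u v, R u v → R v (nxt u v))
variable (hn2 : ∀ u v, R u v → nxt u v ≠ u)
variable (hn3 : ∀ u v z, R u v → R v z → z = u ∨ z = nxt u v)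
variable (hab : R a b)

local notation "x" => sq nxt a b

include hn1 hab in
lemma sq_adj : ∀ k, R (x k) (x (k+1)) := by
  intro k
  induction k using Nat.twoStepInduction with
  | zero => simpa using hab
  | one => rw [show (1:ℕ)+1 = 0+2 by omega, sq_step]; exact hn1 _ _ (by simpa using hab)
  | more k _ ih2 =>
    have hh2 := hn1 _ _ ih2
    rw [← sq_step (nxt := nxt) (a := a) (b := b) (k+1)] at hh2
    rwa [show (k+1)+1 = k+2 by omega, show (k+1)+2 = (k+2)+1 by omega] at hh2

include hn1 hn2 hab in
lemma sq_ne2 (k : ℕ) : x (k+2) ≠ x k := by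
  rw [sq_step]; exact hn2 _ _ (sq_adj hn1 hab k)

include hn1 hn3 hab in
lemma sq_spec (k : ℕ) (z : α) (hz : R (x (k+1)) z) : z = x k ∨ z = x (k+2) := by
  rw [sq_step]; exact hn3 _ _ _ (sq_adj hn1 hab k) hz

/-- forward determinism -/
lemma sq_fwd {i j : ℕ} (h1 : x i = x j) (h2 : x (i+1) = x (j+1)) :
    ∀ t, x (i+t) = x (j+t) := by
  have key : ∀ t, x (i+t) = x (j+t) ∧ x (i+t+1) = x (j+t+1) := by
    intro t
    induction t with
    | zero => exact ⟨by simpa using h1, by simpa using h2⟩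
    | succ t ih =>
      constructor
      · rw [show i+(t+1) = i+t+1 by omega, show j+(t+1) = j+t+1 by omega]; exact ih.2
      · rw [show i+(t+1)+1 = (i+t)+2 by omega, show j+(t+1)+1 = (j+t)+2 by omega,
          sq_step, sq_step, ih.1, ih.2]
  exact fun t => (key t).1

include hsym hn1 hn2 hn3 hab in
/-- backward determinism -/
lemma sq_bwd {i j : ℕ} (h1 : x (i+1) = x (j+1)) (h2 : x (i+2) = x (j+2)) :
    x i = x j := by
  have hz : R (x (j+1)) (x i) := by
    rw [← h1]; exact hsym _ _ (sq_adj hn1 hab i)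
  rcases sq_spec hn1 hn3 hab j _ hz with hc | hc
  · exact hc
  · exact absurd (h2.trans hc.symm) (sq_ne2 hn1 hn2 hab i)

include hsym hn1 hn2 hn3 hab in
lemma sq_pair0 : ∀ k g, x k = x (k+g) → x (k+1) = x (k+g+1) → x 0 = x g ∧ x 1 = x (g+1) := by
  intro k
  induction k with
  | zero => intro g h1 h2; exact ⟨by simpa using h1, by rw [show g+1 = 0+g+1 by omega]; simpa using h2⟩
  | succ k ih =>
    intro g h1 h2
    refine ih g ?_ ?_
    · refine sq_bwd hsym hn1 hn2 hn3 hab (by rw [h1, show k+1+g = k+g+1 by omega]) ?_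
      rw [show k+2 = (k+1)+1 by omega, h2, show k+1+g+1 = k+g+2 by omega]
    · rw [h1, show k+1+g = k+g+1 by omega]

include hirr hn1 hn2 hn3 hab in
lemma rev_absurd : ∀ g s r, r = s + g → x s = x (r+1) → x (s+1) = x r → False := by
  intro g
  induction g using Nat.strong_induction_on with
  | _ g IH =>
    rcases g with - | g
    · intro s r hr h1 h2
      have h2' : x (s+1) = x s := by rw [h2, show r = s by omega]
      have := sq_adj hn1 hab s
      rw [h2'] at this
      exact hirr _ this
    rcases g with - | g
    · intro s r hr h1 h2
      have h1' : x (s+2) = x s := by rw [show s+2 = r+1 by omega, ← h1]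
      exact sq_ne2 hn1 hn2 hab s h1'
    · -- g+2 case
      intro s r hr h1 h2
      have hadj : R (x (s+1)) (x (s+2)) := by
        have := sq_adj hn1 hab (s+1)
        rwa [show s+1+1 = s+2 by omega] at this
      have hz : R (x ((s+g+1)+1)) (x (s+2)) := by
        rw [show s+g+1+1 = r by omega, ← h2]
        exact hadj
      rcases sq_spec hn1 hn3 hab (s+g+1) _ hz with hc | hc
      · exact IH g (by omega) (s+1) (s+g+1) (by omega)
          (by rw [show s+g+1+1 = r by omega, ← h2]) hc
      · have : x (s+2) = x s := by
          rw [hc, show s+g+1+2 = r+1 by omega, ← h1]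
        exact sq_ne2 hn1 hn2 hab s this

include hirr hn1 hn2 hn3 hab in
lemma no_rev (k l : ℕ) (h1 : x k = x (l+1)) (h2 : x (k+1) = x l) : False := by
  rcases le_total k l with hle | hle
  · exact rev_absurd hirr hn1 hn2 hn3 hab (l-k) k l (by omega) h1 h2
  · exact rev_absurd hirr hn1 hn2 hn3 hab (k-l) l k (by omega) h2.symm h1.symm

include hsym hirr hn1 hn2 hn3 hab in
lemma exists_period [Finite α] :
    ∃ m : ℕ, 3 ≤ m ∧ (∀ t, x (t+m) = x t) ∧
      (∀ i j, i < m → j < m → x i = x j → i = j) := by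
  classical
  have hQex : ∃ m : ℕ, 0 < m ∧ x m = x 0 ∧ x (m+1) = x 1 := by
    obtain ⟨i, j, hij, hfeq⟩ :=
      Finite.exists_ne_map_eq_of_infinite (fun k : ℕ => (x k, x (k+1)))
    have hpair : x i = x j ∧ x (i+1) = x (j+1) := by
      constructor
      · exact congrArg Prod.fst hfeq
      · exact congrArg Prod.snd hfeq
    rcases Nat.lt_or_ge i j with hlt | hge
    · obtain ⟨e1, e2⟩ := sq_pair0 hsym hn1 hn2 hn3 hab i (j-i)
        (by rw [hpair.1]; congr 1; omega) (by rw [hpair.2]; congr 1; omega)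
      exact ⟨j-i, by omega, e1.symm, e2.symm⟩
    · have hlt : j < i := by omega
      obtain ⟨e1, e2⟩ := sq_pair0 hsym hn1 hn2 hn3 hab j (i-j)
        (by rw [hpair.1.symm]; congr 1; omega) (by rw [hpair.2.symm]; congr 1; omega)
      exact ⟨i-j, by omega, e1.symm, e2.symm⟩
  set m := Nat.find hQex with hmdef
  obtain ⟨hm0, hme, hme1⟩ := Nat.find_spec hQex
  have hper : ∀ t, x (t+m) = x t := by
    intro t
    have := sq_fwd (nxt := nxt) (a := a) (b := b) (i := m) (j := 0)
      (by exact hme) (by exact hme1) t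
    rw [show m+t = t+m by omega] at this
    simpa using this
  have hinj : ∀ i j, i < m → j < m → x i = x j → i = j := by
    have key : ∀ i j, i < j → j < m → x i = x j → False := by
      intro i j hij hjm heq
      obtain ⟨j', rfl⟩ : ∃ j', j = j'+1 := ⟨j-1, by omega⟩
      have hadj : R (x (j'+1)) (x (i+1)) := by
        rw [← heq]; exact sq_adj hn1 hab i
      rcases sq_spec hn1 hn3 hab j' _ hadj with hc | hc
      · exact no_rev hirr hn1 hn2 hn3 hab i j' heq hc
      · obtain ⟨e1, e2⟩ := sq_pair0 hsym hn1 hn2 hn3 hab i (j'+1-i)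
          (by rw [heq]; congr 1; omega) (by rw [hc]; congr 1; omega)
        have : ¬ (0 < j'+1-i ∧ x (j'+1-i) = x 0 ∧ x (j'+1-i+1) = x 1) :=
          Nat.find_min hQex (by omega)
        exact this ⟨by omega, e1.symm, e2.symm⟩
    intro i j hi hj heq
    rcases Nat.lt_trichotomy i j with hlt | hEq | hlt
    · exact absurd heq (fun hq => key i j hlt hj hq)
    · exact hEq
    · exact absurd heq.symm (fun hq => key j i hlt hi hq)
  refine ⟨m, ?_, hper, hinj⟩
  have hm1 : m ≠ 1 := by
    intro he
    have : x 1 = x 0 := by rw [← he]; exact hme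
    have hadj := sq_adj hn1 hab 0
    rw [show (0:ℕ)+1 = 1 by omega, this] at hadj
    exact hirr _ hadj
  have hm2 : m ≠ 2 := by
    intro he
    have : x 2 = x 0 := by rw [← he]; exact hme
    exact sq_ne2 hn1 hn2 hab 0 (by simpa using this)
  omega

end Props

end OddCycleAux



namespace OddCycleAux2
variable {n : ℕ} {d : Fin n → ℕ} {h : Fin n → Fin n → ℝ}

def Frac (h : Fin n → Fin n → ℝ) (i j : Fin n) : Prop := h i j ≠ 0 ∧ h i j ≠ 1

lemma frac_symm (hmem : h ∈ degreePolytope d) {i j : Fin n} :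
    Frac h i j → Frac h j i := by
  rw [Frac, Frac, hmem.1 i j]; exact id

lemma frac_ne (hmem : h ∈ degreePolytope d) {i j : Fin n} (hf : Frac h i j) : i ≠ j := by
  rintro rfl; exact hf.1 (hmem.2.1 i)

lemma frac_bounds (hmem : h ∈ degreePolytope d) {i j : Fin n} (hf : Frac h i j) :
    0 < h i j ∧ h i j < 1 := by
  obtain ⟨h0, h1⟩ := hmem.2.2.1 i j
  exact ⟨lt_of_le_of_ne h0 (Ne.symm hf.1), lt_of_le_of_ne h1 hf.2⟩

lemma row_sum (hmem : h ∈ degreePolytope d) (v : Fin n) : ∑ j, h v j = d v := by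
  have := hmem.2.2.2 v
  rw [← this]
  exact Finset.sum_congr rfl fun j _ => hmem.1 v j

/-- Extreme point ⇒ trivial kernel: any symmetric perturbation supported on the
fractional entries with zero row sums is zero. -/
lemma kernel_triv (hh : h ∈ Set.extremePoints ℝ (degreePolytope d))
    (y : Fin n → Fin n → ℝ) (hys : ∀ i j, y i j = y j i)
    (hysupp : ∀ i j, ¬ Frac h i j → y i j = 0)
    (hyrow : ∀ j, ∑ i, y i j = 0) : y = 0 := by
  classical
  obtain ⟨hmem, hext⟩ := hh
  obtain ⟨hsym, hdiag, hbdd, hdeg⟩ := hmem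
  have hmem : h ∈ degreePolytope d := ⟨hsym, hdiag, hbdd, hdeg⟩
  by_contra hy0
  have hij0 : ∃ i j, y i j ≠ 0 := by
    by_contra hc
    push_neg at hc
    exact hy0 (funext fun i => funext fun j => hc i j)
  obtain ⟨i0, j0, hy00⟩ := hij0
  have hfr : Frac h i0 j0 := by
    by_contra hc
    exact hy00 (hysupp _ _ hc)
  set O : Finset (Fin n × Fin n) := univ.filter (fun p => Frac h p.1 p.2) with hOdef
  have hO : (i0, j0) ∈ O := by simp [hOdef, hfr]
  have hOne : O.Nonempty := ⟨_, hO⟩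
  set c : ℝ := O.inf' hOne (fun p => min (h p.1 p.2) (1 - h p.1 p.2)) with hcdef
  have hc0 : 0 < c := by
    rw [hcdef, Finset.lt_inf'_iff]
    intro p hp
    have hpf : Frac h p.1 p.2 := by simpa [hOdef] using hp
    obtain ⟨hb1, hb2⟩ := frac_bounds hmem hpf
    exact lt_min hb1 (by linarith)
  have hcle : ∀ p ∈ O, c ≤ min (h p.1 p.2) (1 - h p.1 p.2) := fun p hp =>
    Finset.inf'_le _ hp
  set M : ℝ := O.sup' hOne (fun p => |y p.1 p.2|) with hMdef
  have hM0 : 0 < M := lt_of_lt_of_le (abs_pos.mpr hy00)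
    (Finset.le_sup' (f := fun p => |y p.1 p.2|) hO)
  set ε : ℝ := c / (2 * M) with hεdef
  have hε0 : 0 < ε := by positivity
  have hbound : ∀ i j, Frac h i j → |ε * y i j| ≤ c / 2 := by
    intro i j hf
    have hmem' : (i, j) ∈ O := by simp [hOdef, hf]
    have : |y i j| ≤ M := Finset.le_sup' (f := fun p => |y p.1 p.2|) hmem'
    rw [abs_mul, abs_of_pos hε0, hεdef]
    rw [div_mul_eq_mul_div, div_le_div_iff₀ (by positivity) (by norm_num)]
    calc c * |y i j| * 2 ≤ c * M * 2 := by nlinarith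
    _ ≤ c * (2 * M) := by ring_nf; linarith
  have key : ∀ s : ℝ, s = 1 ∨ s = -1 → (fun i j => h i j + s * (ε * y i j)) ∈ degreePolytope d := by
    intro s hs
    have hs1 : |s| = 1 := by rcases hs with rfl | rfl <;> norm_num
    refine ⟨fun i j => ?_, fun i => ?_, fun i j => ?_, fun j => ?_⟩
    · show h i j + s * (ε * y i j) = h j i + s * (ε * y j i)
      rw [hsym i j, hys i j]
    · show h i i + s * (ε * y i i) = 0
      rw [hdiag i, hysupp i i (fun hf => (frac_ne hmem hf) rfl)]; ring
    · show 0 ≤ h i j + s * (ε * y i j) ∧ h i j + s * (ε * y i j) ≤ 1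
      by_cases hf : Frac h i j
      · obtain ⟨hb1, hb2⟩ := frac_bounds hmem hf
        have hb := hbound i j hf
        have hcl := hcle (i, j) (by simp [hOdef, hf])
        simp only [le_min_iff] at hcl
        have habs : |s * (ε * y i j)| ≤ c / 2 := by
          rw [abs_mul, hs1, one_mul]; exact hb
        have := abs_le.mp habs
        constructor <;> linarith [hcl.1, hcl.2, this.1, this.2]
      · rw [hysupp i j hf]
        have := hbdd i j
        constructor <;> [linarith [this.1]; linarith [this.2]]
    · show ∑ i, (h i j + s * (ε * y i j)) = (d j : ℝ)
      rw [Finset.sum_add_distrib]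
      have : ∑ i, s * (ε * y i j) = s * ε * ∑ i, y i j := by
        rw [Finset.mul_sum]; exact Finset.sum_congr rfl fun i _ => by ring
      rw [this, hyrow, hdeg]; ring
  have hmem1 := key 1 (Or.inl rfl)
  have hmem2 := key (-1) (Or.inr rfl)
  have hseg : h ∈ openSegment ℝ (fun i j => h i j + (1:ℝ) * (ε * y i j))
      (fun i j => h i j + (-1:ℝ) * (ε * y i j)) := by
    refine ⟨1/2, 1/2, by norm_num, by norm_num, by norm_num, ?_⟩
    funext i j
    show (1:ℝ)/2 * (h i j + 1 * (ε * y i j)) + 1/2 * (h i j + (-1) * (ε * y i j)) = h i j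
    ring
  have he1 := hext hmem1 hmem2 hseg
  have he2 := congrFun (congrFun he1 i0) j0
  have hz : ε * y i0 j0 = 0 := by linarith
  rcases mul_eq_zero.mp hz with hc | hc
  · exact absurd hc (ne_of_gt hε0)
  · exact hy00 hc

lemma isInt_sum {β : Type*} {s : Finset β} {f : β → ℝ} (hf : ∀ b ∈ s, ∃ z : ℤ, f b = z) :
    ∃ z : ℤ, ∑ b ∈ s, f b = z := by
  refine Finset.sum_induction f (fun r => ∃ z : ℤ, r = z) ?_ ⟨0, by norm_num⟩ hf
  rintro x y ⟨zx, rfl⟩ ⟨zy, rfl⟩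
  exact ⟨zx + zy, by push_cast; ring⟩

lemma frac_row_int (hmem : h ∈ degreePolytope d) (v : Fin n) (s : Finset (Fin n))
    (hs : ∀ j, j ∈ s ↔ Frac h v j) : ∃ z : ℤ, ∑ j ∈ s, h v j = z := by
  classical
  have hsplit : ∑ j ∈ s, h v j = (d v : ℝ) - ∑ j ∈ sᶜ, h v j := by
    have := row_sum hmem v
    rw [← Finset.sum_add_sum_compl s (fun j => h v j)] at this
    linarith
  obtain ⟨z, hz⟩ : ∃ z : ℤ, ∑ j ∈ sᶜ, h v j = z := by
    refine isInt_sum fun j hj => ?_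
    have : ¬ Frac h v j := by
      rw [← hs]; exact fun hc => (Finset.mem_compl.mp hj) hc
    rcases not_and_or.mp this with hc | hc
    · exact ⟨0, by push_neg at hc; simpa using hc⟩
    · exact ⟨1, by push_neg at hc; simpa using hc⟩
  exact ⟨(d v : ℤ) - z, by rw [hsplit, hz]; push_cast; ring⟩

lemma card_nbrs_ne_one (hmem : h ∈ degreePolytope d) (v : Fin n) (s : Finset (Fin n))
    (hs : ∀ j, j ∈ s ↔ Frac h v j) : s.card ≠ 1 := by
  intro hcard
  obtain ⟨u, rfl⟩ := Finset.card_eq_one.mp hcard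
  obtain ⟨z, hz⟩ := frac_row_int hmem v {u} hs
  rw [Finset.sum_singleton] at hz
  have hf : Frac h v u := (hs u).mp (Finset.mem_singleton_self u)
  obtain ⟨hb1, hb2⟩ := frac_bounds hmem hf
  rw [hz] at hb1 hb2
  have h1 : (0:ℤ) < z := by exact_mod_cast hb1
  have h2 : z < 1 := by exact_mod_cast hb2
  omega

lemma cardP_le (hh : h ∈ Set.extremePoints ℝ (degreePolytope d))
    (P : Finset (Fin n × Fin n)) (hP : ∀ p : Fin n × Fin n, p ∈ P ↔ (p.1 < p.2 ∧ Frac h p.1 p.2))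
    (VF : Finset (Fin n)) (hVF : ∀ v, v ∈ VF ↔ ∃ u, Frac h v u) :
    P.card ≤ VF.card := by
  classical
  have hmem : h ∈ degreePolytope d := hh.1
  set yOf : (↥P → ℝ) → Fin n → Fin n → ℝ := fun f i j =>
    (if hp : (i,j) ∈ P then f ⟨(i,j), hp⟩ else 0) +
    (if hp : (j,i) ∈ P then f ⟨(j,i), hp⟩ else 0) with hyOf
  have hyOf_symm : ∀ f i j, yOf f i j = yOf f j i := by
    intro f i j; simp only [hyOf]; ring
  have hyOf_supp : ∀ f i j, ¬ Frac h i j → yOf f i j = 0 := by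
    intro f i j hnf
    simp only [hyOf]
    rw [dif_neg, dif_neg]
    · ring
    · intro hp; exact hnf (frac_symm hmem ((hP _).mp hp).2)
    · intro hp; exact hnf ((hP _).mp hp).2
  have hyOf_eval : ∀ f (p : ↥P), yOf f p.1.1 p.1.2 = f p := by
    rintro f ⟨⟨p1, p2⟩, hp⟩
    simp only [hyOf]
    rw [dif_pos hp, dif_neg]
    · ring
    · intro hp'
      have h1 := ((hP _).mp hp).1
      have h2 := ((hP _).mp hp').1
      simp only at h1 h2
      exact absurd h1 (not_lt.mpr (le_of_lt h2))
  have hyOf_add : ∀ f g i j, yOf (f + g) i j = yOf f i j + yOf g i j := by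
    intro f g i j; simp only [hyOf]; split_ifs <;> simp <;> ring
  have hyOf_smul : ∀ (c : ℝ) f i j, yOf (c • f) i j = c * yOf f i j := by
    intro c f i j; simp only [hyOf]; split_ifs <;> simp <;> ring
  let L : (↥P → ℝ) →ₗ[ℝ] (↥VF → ℝ) :=
    { toFun := fun f v => ∑ i, yOf f i v.1
      map_add' := by
        intro f g; funext v
        simp only [Pi.add_apply]
        rw [← Finset.sum_add_distrib]
        exact Finset.sum_congr rfl fun i _ => hyOf_add f g i v.1
      map_smul' := by
        intro c f; funext v
        simp only [Pi.smul_apply, RingHom.id_apply, smul_eq_mul]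
        rw [Finset.mul_sum]
        exact Finset.sum_congr rfl fun i _ => hyOf_smul c f i v.1 }
  have hLinj : Function.Injective L := by
    rw [← LinearMap.ker_eq_bot, LinearMap.ker_eq_bot']
    intro f hf0
    have hrows : ∀ j, ∑ i, yOf f i j = 0 := by
      intro j
      by_cases hj : j ∈ VF
      · exact congrFun hf0 ⟨j, hj⟩
      · refine Finset.sum_eq_zero fun i _ => ?_
        simp only [hyOf]
        rw [dif_neg, dif_neg]
        · ring
        · intro hp
          exact hj ((hVF j).mpr ⟨i, ((hP _).mp hp).2⟩)
        · intro hp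
          exact hj ((hVF j).mpr ⟨i, frac_symm hmem ((hP _).mp hp).2⟩)
    have hy0 : yOf f = 0 := kernel_triv hh (yOf f) (hyOf_symm f) (hyOf_supp f) hrows
    funext p
    have := hyOf_eval f p
    rw [hy0] at this
    simpa using this.symm
  have h1 : Module.finrank ℝ (↥P → ℝ) ≤ Module.finrank ℝ (↥VF → ℝ) :=
    LinearMap.finrank_le_finrank_of_injective hLinj
  rwa [Module.finrank_fintype_fun_eq_card, Module.finrank_fintype_fun_eq_card,
    Fintype.card_coe, Fintype.card_coe] at h1

lemma double_count (hmem : h ∈ degreePolytope d)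
    (Nv : Fin n → Finset (Fin n)) (hN : ∀ v j, j ∈ Nv v ↔ Frac h v j)
    (P : Finset (Fin n × Fin n)) (hP : ∀ p : Fin n × Fin n, p ∈ P ↔ (p.1 < p.2 ∧ Frac h p.1 p.2)) :
    ∑ v, (Nv v).card = 2 * P.card := by
  classical
  set O : Finset (Fin n × Fin n) := univ.filter (fun p => Frac h p.1 p.2) with hO
  have step1 : O.card = ∑ v, (O.filter (fun p => p.1 = v)).card :=
    Finset.card_eq_sum_card_fiberwise (fun p _ => Finset.mem_univ p.1)
  have step2 : ∀ v, (O.filter (fun p => p.1 = v)).card = (Nv v).card := by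
    intro v
    refine Finset.card_bij (fun p _ => p.2) ?_ ?_ ?_
    · rintro p hp
      rw [Finset.mem_filter] at hp
      obtain ⟨hp1, hp2⟩ := hp
      rw [hO, Finset.mem_filter] at hp1
      have hf := hp1.2
      rw [hp2] at hf
      exact (hN v p.2).mpr hf
    · rintro p hp q hq hpq
      rw [Finset.mem_filter] at hp hq
      exact Prod.ext (hp.2.trans hq.2.symm) hpq
    · intro j hj
      refine ⟨(v, j), ?_, rfl⟩
      rw [Finset.mem_filter, hO, Finset.mem_filter]
      exact ⟨⟨Finset.mem_univ _, (hN v j).mp hj⟩, rfl⟩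
  have step3 : O.card = 2 * P.card := by
    have hsplit := Finset.card_filter_add_card_filter_not
      (s := O) (p := fun p => p.1 < p.2)
    have hA : O.filter (fun p => p.1 < p.2) = P := by
      ext p
      simp only [Finset.mem_filter, hO, Finset.mem_univ, true_and, hP]
      tauto
    have hB : (O.filter (fun p => ¬ p.1 < p.2)).card = P.card := by
      refine Finset.card_bij (fun p _ => (p.2, p.1)) ?_ ?_ ?_
      · rintro p hp
        rw [Finset.mem_filter, hO, Finset.mem_filter] at hp
        obtain ⟨⟨-, hf⟩, hlt⟩ := hp
        rw [hP]
        have hne := frac_ne hmem hf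
        refine ⟨?_, frac_symm hmem hf⟩
        show p.2 < p.1
        rcases lt_or_ge p.2 p.1 with hc | hc
        · exact hc
        · exact absurd (lt_of_le_of_ne hc hne) hlt
      · rintro p hp q hq hpq
        have h1 := congrArg Prod.fst hpq
        have h2 := congrArg Prod.snd hpq
        simp only at h1 h2
        exact Prod.ext h2 h1
      · intro q hq
        rw [hP] at hq
        refine ⟨(q.2, q.1), ?_, rfl⟩
        rw [Finset.mem_filter, hO, Finset.mem_filter]
        exact ⟨⟨Finset.mem_univ _, frac_symm hmem hq.2⟩, not_lt.mpr (le_of_lt hq.1)⟩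
    rw [hA] at hsplit
    omega
  rw [← step3, step1]
  exact Finset.sum_congr rfl fun v _ => (step2 v).symm

lemma nbr_card_two (hh : h ∈ Set.extremePoints ℝ (degreePolytope d)) :
    ∀ (v : Fin n) (s : Finset (Fin n)), (∀ u, u ∈ s ↔ Frac h v u) → s.Nonempty →
      s.card = 2 := by
  classical
  have hmem : h ∈ degreePolytope d := hh.1
  set Nv : Fin n → Finset (Fin n) := fun v => univ.filter (fun j => Frac h v j) with hNv
  have hN : ∀ v j, j ∈ Nv v ↔ Frac h v j := by
    intro v j; rw [hNv]; simp
  set P : Finset (Fin n × Fin n) :=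
    univ.filter (fun p => p.1 < p.2 ∧ Frac h p.1 p.2) with hPdef
  have hP : ∀ p : Fin n × Fin n, p ∈ P ↔ (p.1 < p.2 ∧ Frac h p.1 p.2) := by
    intro p; rw [hPdef]; simp
  set VF : Finset (Fin n) := univ.filter (fun v => (Nv v).Nonempty) with hVFdef
  have hVF : ∀ v, v ∈ VF ↔ ∃ u, Frac h v u := by
    intro v
    rw [hVFdef, Finset.mem_filter]
    simp only [Finset.mem_univ, true_and]
    constructor
    · rintro ⟨u, hu⟩; exact ⟨u, (hN v u).mp hu⟩
    · rintro ⟨u, hu⟩; exact ⟨u, (hN v u).mpr hu⟩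
  have le1 : P.card ≤ VF.card := cardP_le hh P hP VF hVF
  have dc : ∑ v, (Nv v).card = 2 * P.card := double_count hmem Nv hN P hP
  have sumVF : ∑ v ∈ VF, (Nv v).card = ∑ v, (Nv v).card := by
    refine Finset.sum_subset (Finset.subset_univ VF) ?_
    intro v _ hv
    rw [hVFdef, Finset.mem_filter] at hv
    push_neg at hv
    rw [Finset.card_eq_zero, ← Finset.not_nonempty_iff_eq_empty]
    exact fun hc => (Finset.not_nonempty_iff_eq_empty.mpr (hv (Finset.mem_univ v))) hc
  have ge2 : ∀ v ∈ VF, 2 ≤ (Nv v).card := by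
    intro v hv
    rw [hVFdef, Finset.mem_filter] at hv
    have h0 : (Nv v).card ≠ 0 := by
      rw [Finset.card_ne_zero]
      exact hv.2
    have h1 : (Nv v).card ≠ 1 := card_nbrs_ne_one hmem v (Nv v) (hN v)
    omega
  have heq : ∑ v ∈ VF, (Nv v).card = 2 * VF.card := by
    have hge : 2 * VF.card ≤ ∑ v ∈ VF, (Nv v).card := by
      calc 2 * VF.card = ∑ _v ∈ VF, 2 := by rw [Finset.sum_const, smul_eq_mul]; ring
      _ ≤ ∑ v ∈ VF, (Nv v).card := Finset.sum_le_sum ge2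
    omega
  have key : ∀ v ∈ VF, (Nv v).card = 2 := by
    by_contra hc
    push_neg at hc
    obtain ⟨v0, hv0, hv0ne⟩ := hc
    have : ∑ _v ∈ VF, 2 < ∑ v ∈ VF, (Nv v).card := by
      refine Finset.sum_lt_sum ge2 ⟨v0, hv0, ?_⟩
      have := ge2 v0 hv0
      omega
    rw [Finset.sum_const, smul_eq_mul] at this
    omega
  intro v s hs hsne
  have hseq : s = Nv v := by
    ext u; rw [hs, hN]
  rw [hseq]
  refine key v ?_
  rw [hVFdef, Finset.mem_filter]
  exact ⟨Finset.mem_univ v, hseq ▸ hsne⟩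

lemma two_nbrs (hh : h ∈ Set.extremePoints ℝ (degreePolytope d)) :
    ∀ v u, Frac h v u → ∃ w, w ≠ u ∧ Frac h v w ∧ (∀ z, Frac h v z → z = u ∨ z = w) := by
  classical
  intro v u hf
  set s : Finset (Fin n) := univ.filter (fun j => Frac h v j) with hsdef
  have hs : ∀ j, j ∈ s ↔ Frac h v j := by intro j; rw [hsdef]; simp
  have hu : u ∈ s := (hs u).mpr hf
  have hcard : s.card = 2 := nbr_card_two hh v s hs ⟨u, hu⟩
  obtain ⟨a, c, hac, hset⟩ := Finset.card_eq_two.mp hcard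
  rw [hset, Finset.mem_insert, Finset.mem_singleton] at hu
  rcases hu with rfl | rfl
  · refine ⟨c, hac.symm, ?_, ?_⟩
    · exact (hs c).mp (by rw [hset]; simp)
    · intro z hz
      have := (hs z).mpr hz
      rw [hset, Finset.mem_insert, Finset.mem_singleton] at this
      tauto
  · refine ⟨a, hac, ?_, ?_⟩
    · exact (hs a).mp (by rw [hset]; simp)
    · intro z hz
      have := (hs z).mpr hz
      rw [hset, Finset.mem_insert, Finset.mem_singleton] at this
      tauto

lemma frac_half (hh : h ∈ Set.extremePoints ℝ (degreePolytope d)) :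
    ∀ i j, Frac h i j → h i j = 1/2 := by
  classical
  have hmem : h ∈ degreePolytope d := hh.1
  set y : Fin n → Fin n → ℝ := fun i j => if Frac h i j then h i j - 1/2 else 0 with hydef
  have hys : ∀ i j, y i j = y j i := by
    intro i j
    rw [hydef]
    simp only
    by_cases hf : Frac h i j
    · rw [if_pos hf, if_pos (frac_symm hmem hf), hmem.1 i j]
    · rw [if_neg hf, if_neg (fun hc => hf (frac_symm hmem hc))]
  have hysupp : ∀ i j, ¬ Frac h i j → y i j = 0 := by
    intro i j hnf; rw [hydef]; simp only [if_neg hnf]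
  have hyrow : ∀ j, ∑ i, y i j = 0 := by
    intro j
    set s : Finset (Fin n) := univ.filter (fun i => Frac h j i) with hsdef
    have hs : ∀ i, i ∈ s ↔ Frac h j i := by intro i; rw [hsdef]; simp
    have hrow : ∑ i, y i j = ∑ i ∈ s, (h j i - 1/2) := by
      rw [Finset.sum_filter]
      refine Finset.sum_congr rfl fun i _ => ?_
      rw [hydef]
      simp only
      by_cases hf : Frac h j i
      · rw [if_pos hf, if_pos (frac_symm hmem hf), hmem.1 i j]
      · rw [if_neg hf, if_neg (fun hc => hf (frac_symm hmem hc))]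
    rcases Finset.eq_empty_or_nonempty s with hse | hsne
    · rw [hrow, hse, Finset.sum_empty]
    · have hcard : s.card = 2 := nbr_card_two hh j s hs hsne
      obtain ⟨z, hz⟩ := frac_row_int hmem j s hs
      obtain ⟨a, c, hac, hset⟩ := Finset.card_eq_two.mp hcard
      have hfa : Frac h j a := (hs a).mp (by rw [hset]; simp)
      have hfc : Frac h j c := (hs c).mp (by rw [hset]; simp)
      have hsum : ∑ i ∈ s, h j i = h j a + h j c := by
        rw [hset, Finset.sum_insert (by simp [hac]), Finset.sum_singleton]
      obtain ⟨ha1, ha2⟩ := frac_bounds hmem hfa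
      obtain ⟨hc1, hc2⟩ := frac_bounds hmem hfc
      have hzb : (0:ℝ) < z ∧ (z:ℝ) < 2 := by
        rw [← hz, hsum]; constructor <;> linarith
      have hz1 : z = 1 := by
        have h1 : (0:ℤ) < z := by exact_mod_cast hzb.1
        have h2 : z < 2 := by exact_mod_cast hzb.2
        omega
      have hsum1 : ∑ i ∈ s, h j i = 1 := by rw [hz, hz1]; norm_num
      rw [hrow, Finset.sum_sub_distrib, hsum1, Finset.sum_const, hcard]
      norm_num
  have hy0 := kernel_triv hh y hys hysupp hyrow
  intro i j hf
  have := congrFun (congrFun hy0 i) j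
  rw [hydef] at this
  simp only [if_pos hf, Pi.zero_apply] at this
  linarith

lemma sum_d_even (hd : ∃ G : SimpleGraph (Fin n), ∀ i, {j | G.Adj i j}.ncard = d i) :
    Even (∑ j, d j) := by
  classical
  obtain ⟨G, hG⟩ := hd
  letI : DecidableRel G.Adj := Classical.decRel _
  have hdeg : ∀ i, d i = G.degree i := by
    intro i
    rw [← hG i]
    have : {j | G.Adj i j} = ↑(G.neighborFinset i) := by
      ext j; simp [SimpleGraph.mem_neighborFinset]
    rw [this, Set.ncard_coe_finset, SimpleGraph.degree]
  have : ∑ j, d j = ∑ j, G.degree j := Finset.sum_congr rfl fun j _ => hdeg j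
  rw [this, SimpleGraph.sum_degrees_eq_twice_card_edges]
  exact ⟨G.edgeFinset.card, by ring⟩

lemma cardP_even (hh : h ∈ Set.extremePoints ℝ (degreePolytope d))
    (hd : ∃ G : SimpleGraph (Fin n), ∀ i, {j | G.Adj i j}.ncard = d i)
    (P : Finset (Fin n × Fin n))
    (hP : ∀ p : Fin n × Fin n, p ∈ P ↔ (p.1 < p.2 ∧ Frac h p.1 p.2)) :
    Even P.card := by
  classical
  have hmem : h ∈ degreePolytope d := hh.1
  set allP : Finset (Fin n × Fin n) := univ.filter (fun p => p.1 < p.2) with hallP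
  -- total sum over all ordered pairs
  have htot : ∑ p : Fin n × Fin n, h p.1 p.2 = ∑ j, (d j : ℝ) := by
    rw [← Finset.univ_product_univ, Finset.sum_product]
    rw [Finset.sum_comm]
    exact Finset.sum_congr rfl fun j _ => hmem.2.2.2 j
  -- the sum over p.2 < p.1 equals the sum over p.1 < p.2
  have hswap : ∑ p ∈ univ.filter (fun p : Fin n × Fin n => ¬ p.1 < p.2 ∧ p.2 < p.1), h p.1 p.2
      = ∑ p ∈ allP, h p.1 p.2 := by
    refine Finset.sum_bij (fun p _ => (p.2, p.1)) ?_ ?_ ?_ ?_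
    · intro p hp
      rw [Finset.mem_filter] at hp
      rw [hallP, Finset.mem_filter]
      exact ⟨Finset.mem_univ _, hp.2.2⟩
    · intro p hp q hq hpq
      have h1 := congrArg Prod.fst hpq
      have h2 := congrArg Prod.snd hpq
      simp only at h1 h2
      exact Prod.ext h2 h1
    · intro q hq
      rw [hallP, Finset.mem_filter] at hq
      refine ⟨(q.2, q.1), ?_, rfl⟩
      rw [Finset.mem_filter]
      exact ⟨Finset.mem_univ _, not_lt.mpr (le_of_lt hq.2), hq.2⟩
    · intro p hp
      exact hmem.1 p.1 p.2
  have hdiag : ∑ p ∈ univ.filter (fun p : Fin n × Fin n => ¬ p.1 < p.2 ∧ ¬ p.2 < p.1), h p.1 p.2 = 0 := by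
    refine Finset.sum_eq_zero fun p hp => ?_
    rw [Finset.mem_filter] at hp
    have : p.1 = p.2 := le_antisymm (not_lt.mp hp.2.2) (not_lt.mp hp.2.1)
    rw [this]
    exact hmem.2.1 p.2
  have hsplit2 : ∑ p : Fin n × Fin n, h p.1 p.2
      = ∑ p ∈ allP, h p.1 p.2 + (∑ p ∈ univ.filter (fun p : Fin n × Fin n => ¬ p.1 < p.2 ∧ p.2 < p.1), h p.1 p.2
        + ∑ p ∈ univ.filter (fun p : Fin n × Fin n => ¬ p.1 < p.2 ∧ ¬ p.2 < p.1), h p.1 p.2) := by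
    rw [← Finset.sum_filter_add_sum_filter_not univ (fun p : Fin n × Fin n => p.1 < p.2),
      ← Finset.sum_filter_add_sum_filter_not (univ.filter (fun p : Fin n × Fin n => ¬ p.1 < p.2)) (fun p => p.2 < p.1),
      Finset.filter_filter, Finset.filter_filter, hallP]
  have h2sum : 2 * ∑ p ∈ allP, h p.1 p.2 = ∑ j, (d j : ℝ) := by
    rw [← htot, hsplit2, hswap, hdiag]; ring
  -- split allP into fractional and integral pairs
  have hPsub : P ⊆ allP := by
    intro p hp
    rw [hP] at hp
    rw [hallP, Finset.mem_filter]
    exact ⟨Finset.mem_univ _, hp.1⟩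
  have hsplitP : ∑ p ∈ allP, h p.1 p.2 = ∑ p ∈ allP \ P, h p.1 p.2 + ∑ p ∈ P, h p.1 p.2 :=
    (Finset.sum_sdiff hPsub).symm
  have hPhalf : ∑ p ∈ P, h p.1 p.2 = P.card * (1/2 : ℝ) := by
    rw [Finset.sum_congr rfl (fun p hp => frac_half hh p.1 p.2 ((hP p).mp hp).2),
      Finset.sum_const, nsmul_eq_mul]
  obtain ⟨z, hz⟩ : ∃ z : ℤ, ∑ p ∈ allP \ P, h p.1 p.2 = z := by
    refine isInt_sum fun p hp => ?_
    rw [Finset.mem_sdiff, hallP, Finset.mem_filter, hP] at hp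
    have hnf : ¬ Frac h p.1 p.2 := fun hc => hp.2 ⟨hp.1.2, hc⟩
    rcases not_and_or.mp hnf with hc | hc
    · exact ⟨0, by push_neg at hc; simpa using hc⟩
    · exact ⟨1, by push_neg at hc; simpa using hc⟩
  obtain ⟨q, hq⟩ := sum_d_even hd
  have hcast : (P.card : ℝ) = 2 * q - 2 * z := by
    have hdq : ∑ j, (d j : ℝ) = 2 * q := by
      have : ((∑ j, d j : ℕ) : ℝ) = ((q + q : ℕ) : ℝ) := by rw [← hq]
      push_cast at this
      rw [this]; ring
    have := h2sum
    rw [hsplitP, hPhalf, hz, hdq] at this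
    linarith
  have : (P.card : ℤ) = 2 * q - 2 * z := by exact_mod_cast hcast
  have heven : Even (P.card : ℤ) := ⟨q - z, by omega⟩
  exact Int.even_coe_nat P.card |>.mp heven


lemma adj_iff (hmem : h ∈ degreePolytope d) (i j : Fin n) :
    (nonIntegralGraph h).Adj i j ↔ Frac h i j := by
  rw [nonIntegralGraph, SimpleGraph.fromRel_adj]
  have hiff : ∀ a b : Fin n, (h a b ∉ ({0, 1} : Set ℝ)) ↔ Frac h a b := by
    intro a b
    simp only [Set.mem_insert_iff, Set.mem_singleton_iff, not_or, Frac]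
  constructor
  · rintro ⟨hne, hc | hc⟩
    · exact (hiff i j).mp hc
    · exact frac_symm hmem ((hiff j i).mp hc)
  · intro hf
    exact ⟨frac_ne hmem hf, Or.inl ((hiff i j).mpr hf)⟩

lemma fiber_odd (hh : h ∈ Set.extremePoints ℝ (degreePolytope d))
    (P : Finset (Fin n × Fin n))
    (hP : ∀ p : Fin n × Fin n, p ∈ P ↔ (p.1 < p.2 ∧ Frac h p.1 p.2))
    (v w : Fin n) (hfvw : Frac h v w)
    (C : (nonIntegralGraph h).ConnectedComponent)
    (hC : (nonIntegralGraph h).connectedComponentMk v = C)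
    (F : Finset (Fin n × Fin n))
    (hF : ∀ p : Fin n × Fin n, p ∈ F ↔ (p ∈ P ∧ (nonIntegralGraph h).connectedComponentMk p.1 = C)) :
    Odd F.card := by
  classical
  have hmem : h ∈ degreePolytope d := hh.1
  -- the successor function
  set nxt : Fin n → Fin n → Fin n := fun u v' =>
    if hf : Frac h u v' then (two_nbrs hh v' u (frac_symm hmem hf)).choose else u with hnxt
  have hsymR : ∀ u v', Frac h u v' → Frac h v' u := fun u v' => frac_symm hmem
  have hirrR : ∀ u, ¬ Frac h u u := fun u hu => frac_ne hmem hu rfl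
  have hn1 : ∀ u v', Frac h u v' → Frac h v' (nxt u v') := by
    intro u v' hf
    simp only [hnxt]
    rw [dif_pos hf]
    exact ((two_nbrs hh v' u (frac_symm hmem hf)).choose_spec).2.1
  have hn2 : ∀ u v', Frac h u v' → nxt u v' ≠ u := by
    intro u v' hf
    simp only [hnxt]
    rw [dif_pos hf]
    exact ((two_nbrs hh v' u (frac_symm hmem hf)).choose_spec).1
  have hn3 : ∀ u v' z, Frac h u v' → Frac h v' z → z = u ∨ z = nxt u v' := by
    intro u v' z hf hz
    simp only [hnxt]
    rw [dif_pos hf]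
    exact ((two_nbrs hh v' u (frac_symm hmem hf)).choose_spec).2.2 z hz
  obtain ⟨m, hm3, hper, hinj⟩ :=
    OddCycleAux.exists_period hsymR hirrR hn1 hn2 hn3 hfvw
  set x := OddCycleAux.sq nxt v w with hxdef
  have hxadj : ∀ k, Frac h (x k) (x (k+1)) := OddCycleAux.sq_adj hn1 hfvw
  have hxne2 : ∀ k, x (k+2) ≠ x k := OddCycleAux.sq_ne2 hn1 hn2 hfvw
  have hxspec : ∀ k z, Frac h (x (k+1)) z → z = x k ∨ z = x (k+2) :=
    OddCycleAux.sq_spec hn1 hn3 hfvw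
  have hnorev : ∀ k l, x k = x (l+1) → x (k+1) = x l → False :=
    fun k l => OddCycleAux.no_rev hirrR hn1 hn2 hn3 hfvw k l
  have hperq : ∀ t q, x (t + q * m) = x t := by
    intro t q
    induction q with
    | zero => simp
    | succ q ih =>
      rw [show t + (q+1) * m = (t + q * m) + m by ring, hper, ih]
  have hmod : ∀ s, x (s % m) = x s ∧ x (s % m + 1) = x (s + 1) := by
    intro s
    constructor
    · have := hperq (s % m) (s / m)
      rw [Nat.mod_add_div'] at this
      exact this.symm
    · have := hperq (s % m + 1) (s / m)
      rw [show s % m + 1 + s / m * m = s % m + s / m * m + 1 by ring, Nat.mod_add_div'] at this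
      exact this.symm
  have hx0 : x 0 = v := rfl
  have hx1 : x 1 = w := rfl
  have hreach : ∀ k, (nonIntegralGraph h).Reachable v (x k) := by
    intro k
    induction k with
    | zero => rw [hx0]
    | succ k ih =>
      exact ih.trans ((adj_iff hmem _ _).mpr (hxadj k)).reachable
  have hclosed : ∀ u z, (∃ k, u = x k) → Frac h u z → ∃ k, z = x k := by
    rintro u z ⟨k, rfl⟩ hf
    set t := k + m - 1 with ht
    have ht1 : t + 1 = k + m := by omega
    have hxk : x (t + 1) = x k := by rw [ht1]; exact hper k
    have hf' : Frac h (x (t+1)) z := by rw [hxk]; exact hf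
    rcases hxspec t z hf' with hc | hc
    exacts [⟨t, hc⟩, ⟨t+2, hc⟩]
  have hcover : ∀ u, (nonIntegralGraph h).Reachable v u → ∃ k, u = x k := by
    intro u hru
    obtain ⟨W⟩ := hru
    have key : ∀ (c u' : Fin n) (W : (nonIntegralGraph h).Walk c u'), (∃ k, c = x k) → ∃ k, u' = x k := by
      intro c u' W
      induction W with
      | nil => exact id
      | cons ha W ih =>
        intro hc
        exact ih (hclosed _ _ hc ((adj_iff hmem _ _).mp ha))
    exact key v u W ⟨0, hx0.symm⟩
  set pr : ℕ → Fin n × Fin n := fun k =>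
    if x k < x (k+1) then (x k, x (k+1)) else (x (k+1), x k) with hpr
  have hprP : ∀ k, pr k ∈ P ∧ (nonIntegralGraph h).connectedComponentMk (pr k).1 = C := by
    intro k
    have hf := hxadj k
    have hne : x k ≠ x (k+1) := frac_ne hmem hf
    have hr1 : (nonIntegralGraph h).connectedComponentMk (x k) = C := by
      rw [← hC]
      exact SimpleGraph.ConnectedComponent.sound (hreach k).symm
    have hr2 : (nonIntegralGraph h).connectedComponentMk (x (k+1)) = C := by
      rw [← hC]
      exact SimpleGraph.ConnectedComponent.sound (hreach (k+1)).symm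
    by_cases hlt : x k < x (k+1)
    · simp only [hpr]
      rw [if_pos hlt]
      exact ⟨(hP _).mpr ⟨hlt, hf⟩, hr1⟩
    · have hgt : x (k+1) < x k :=
        lt_of_le_of_ne (not_lt.mp hlt) (fun he => hne he.symm)
      simp only [hpr]
      rw [if_neg hlt]
      exact ⟨(hP _).mpr ⟨hgt, frac_symm hmem hf⟩, hr2⟩
  have himg : F = (Finset.range m).image pr := by
    ext p
    rw [hF p]
    simp only [Finset.mem_image, Finset.mem_range]
    constructor
    · rintro ⟨hpP, hpC⟩
      have hfr := ((hP p).mp hpP).2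
      have hlt := ((hP p).mp hpP).1
      have hreach1 : (nonIntegralGraph h).Reachable v p.1 :=
        (SimpleGraph.ConnectedComponent.eq).mp (hC.trans hpC.symm)
      obtain ⟨k, hk1⟩ := hcover p.1 hreach1
      set t := k + m - 1 with ht
      have ht1 : t + 1 = k + m := by omega
      have hxt : x (t+1) = p.1 := by rw [ht1, hper k, ← hk1]
      have hf' : Frac h (x (t+1)) p.2 := by rw [hxt]; exact hfr
      rcases hxspec t _ hf' with hc | hc
      · refine ⟨t % m, Nat.mod_lt _ (by omega), ?_⟩
        have e1 : x (t % m) = p.2 := by rw [(hmod t).1, ← hc]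
        have e2 : x (t % m + 1) = p.1 := by rw [(hmod t).2, hxt]
        simp only [hpr]
        rw [e1, e2, if_neg (not_lt.mpr (le_of_lt hlt))]
      · refine ⟨(t+1) % m, Nat.mod_lt _ (by omega), ?_⟩
        have e1 : x ((t+1) % m) = p.1 := by rw [(hmod (t+1)).1, hxt]
        have e2 : x ((t+1) % m + 1) = p.2 := by
          rw [(hmod (t+1)).2, show t+1+1 = t+2 by omega, ← hc]
        simp only [hpr]
        rw [e1, e2, if_pos hlt]
    · rintro ⟨k, hkm, rfl⟩
      exact ⟨(hprP k).1, (hprP k).2⟩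
  have hinjimg : Set.InjOn pr ↑(Finset.range m) := by
    intro k hk l hl hkl
    rw [Finset.mem_coe, Finset.mem_range] at hk hl
    simp only [hpr] at hkl
    split_ifs at hkl with ha hb hb
    · exact hinj k l hk hl (Prod.ext_iff.mp hkl).1
    · exact absurd hkl (fun he =>
        hnorev k l (Prod.ext_iff.mp he).1 (Prod.ext_iff.mp he).2)
    · exact absurd hkl (fun he =>
        hnorev k l (Prod.ext_iff.mp he).2 (Prod.ext_iff.mp he).1)
    · exact hinj k l hk hl (Prod.ext_iff.mp hkl).2
  have hcard : F.card = m := by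
    rw [himg, Finset.card_image_of_injOn hinjimg, Finset.card_range]
  rw [hcard]
  -- it remains to prove that m is odd
  rcases Nat.even_or_odd m with hE | hO
  swap
  · exact hO
  exfalso
  set yy : Fin n → Fin n → ℝ := fun u z => ∑ k ∈ Finset.range m,
    ((if u = x k ∧ z = x (k+1) then ((-1:ℝ))^k else 0) +
     (if z = x k ∧ u = x (k+1) then ((-1:ℝ))^k else 0)) with hyy
  have hys : ∀ u z, yy u z = yy z u := by
    intro u z
    simp only [hyy]
    exact Finset.sum_congr rfl fun k _ => add_comm _ _
  have hysupp : ∀ u z, ¬ Frac h u z → yy u z = 0 := by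
    intro u z hnf
    simp only [hyy]
    refine Finset.sum_eq_zero fun k _ => ?_
    have e1 : ¬ (u = x k ∧ z = x (k+1)) := by
      rintro ⟨e1, e2⟩
      exact hnf (by rw [e1, e2]; exact hxadj k)
    have e2 : ¬ (z = x k ∧ u = x (k+1)) := by
      rintro ⟨e1, e2⟩
      exact hnf (by rw [e1, e2]; exact frac_symm hmem (hxadj k))
    rw [if_neg e1, if_neg e2]
    ring
  have hrows : ∀ z, ∑ u, yy u z = 0 := by
    intro z
    have hswap : ∑ u, yy u z = ∑ k ∈ Finset.range m,
        ((if z = x (k+1) then ((-1:ℝ))^k else 0) + (if z = x k then ((-1:ℝ))^k else 0)) := by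
      simp only [hyy]
      rw [Finset.sum_comm]
      refine Finset.sum_congr rfl fun k _ => ?_
      rw [Finset.sum_add_distrib]
      congr 1
      · by_cases hz : z = x (k+1)
        · rw [if_pos hz]
          have he : ∀ u : Fin n, (if u = x k ∧ z = x (k+1) then ((-1:ℝ))^k else 0)
              = (if u = x k then ((-1:ℝ))^k else 0) := fun u => by rw [hz]; simp
          rw [Finset.sum_congr rfl (fun u _ => he u),
            Finset.sum_ite_eq' Finset.univ (x k) (fun _ => ((-1:ℝ))^k),
            if_pos (Finset.mem_univ _)]
        · rw [if_neg hz]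
          exact Finset.sum_eq_zero fun u _ => if_neg (fun hcon => hz hcon.2)
      · by_cases hz : z = x k
        · rw [if_pos hz]
          have he : ∀ u : Fin n, (if z = x k ∧ u = x (k+1) then ((-1:ℝ))^k else 0)
              = (if u = x (k+1) then ((-1:ℝ))^k else 0) := fun u => by rw [hz]; simp
          rw [Finset.sum_congr rfl (fun u _ => he u),
            Finset.sum_ite_eq' Finset.univ (x (k+1)) (fun _ => ((-1:ℝ))^k),
            if_pos (Finset.mem_univ _)]
        · rw [if_neg hz]
          exact Finset.sum_eq_zero fun u _ => if_neg (fun hcon => hz hcon.1)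
    by_cases hzx : ∃ t, t < m ∧ z = x t
    · obtain ⟨t, htm, rfl⟩ := hzx
      rw [hswap, Finset.sum_add_distrib]
      have hS2 : ∑ k ∈ Finset.range m, (if x t = x k then ((-1:ℝ))^k else 0) = (-1)^t := by
        rw [Finset.sum_eq_single t]
        · rw [if_pos rfl]
        · intro k hk hkt
          rw [if_neg]
          intro he
          exact hkt (hinj k t (Finset.mem_range.mp hk) htm he.symm)
        · intro hni
          exact absurd (Finset.mem_range.mpr htm) hni
      by_cases ht0 : t = 0
      · subst ht0
        have hS1 : ∑ k ∈ Finset.range m, (if x 0 = x (k+1) then ((-1:ℝ))^k else 0)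
            = (-1)^(m-1) := by
          rw [Finset.sum_eq_single (m-1)]
          · rw [if_pos (by rw [show m-1+1 = 0+m by omega, hper 0])]
          · intro k hk hkm1
            rw [if_neg]
            intro he
            have hk1 : k + 1 < m := by
              have := Finset.mem_range.mp hk
              omega
            have := hinj 0 (k+1) (by omega) hk1 he
            omega
          · intro hni
            exact absurd (Finset.mem_range.mpr (by omega)) hni
        rw [hS1, hS2]
        have hmo : Odd (m - 1) := by
          obtain ⟨r, hr⟩ := hE
          exact ⟨r - 1, by omega⟩
        rw [hmo.neg_one_pow, pow_zero]
        ring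
      · have hS1 : ∑ k ∈ Finset.range m, (if x t = x (k+1) then ((-1:ℝ))^k else 0)
            = (-1)^(t-1) := by
          rw [Finset.sum_eq_single (t-1)]
          · rw [if_pos (by rw [show t-1+1 = t by omega])]
          · intro k hk hkt1
            rw [if_neg]
            intro he
            by_cases hk1 : k + 1 < m
            · have := hinj t (k+1) htm hk1 he
              omega
            · have hk1m : k + 1 = m := by
                have := Finset.mem_range.mp hk
                omega
              have he0 : x t = x 0 := by rw [he, hk1m, show m = 0 + m by omega, hper 0]
              exact ht0 (hinj t 0 htm (by omega) he0)
          · intro hni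
            exact absurd (Finset.mem_range.mpr (by omega)) hni
        rw [hS1, hS2]
        have h' : ((-1:ℝ))^t = -((-1:ℝ))^(t-1) := by
          conv_lhs => rw [show t = (t-1)+1 by omega]
          rw [pow_succ]
          ring
        linarith
    · push_neg at hzx
      rw [hswap]
      refine Finset.sum_eq_zero fun k hk => ?_
      have hkm := Finset.mem_range.mp hk
      have e2 : ¬ z = x k := hzx k hkm
      have e1 : ¬ z = x (k+1) := by
        by_cases hk1 : k + 1 < m
        · exact hzx (k+1) hk1
        · have hk1m : k + 1 = m := by omega
          intro he
          exact hzx 0 (by omega) (by rw [he, hk1m, show m = 0 + m by omega, hper 0])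
      rw [if_neg e1, if_neg e2]
      ring
  have hy0 := kernel_triv hh yy hys hysupp hrows
  have heval : yy (x 0) (x 1) = 1 := by
    simp only [hyy]
    rw [Finset.sum_eq_single 0]
    · have e2 : ¬ (x 1 = x 0 ∧ x 0 = x (0+1)) := by
        rintro ⟨e1, -⟩
        exact (frac_ne hmem (hxadj 0)) e1.symm
      rw [if_pos ⟨rfl, rfl⟩, if_neg e2, pow_zero]
      ring
    · intro k hk hk0
      have hkm := Finset.mem_range.mp hk
      have e1 : ¬ (x 0 = x k ∧ x 1 = x (k+1)) := by
        rintro ⟨e1, -⟩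
        exact hk0 (hinj k 0 hkm (by omega) e1.symm)
      have e2 : ¬ (x 1 = x k ∧ x 0 = x (k+1)) := by
        rintro ⟨e1, e2⟩
        have hk1 : k = 1 := hinj k 1 hkm (by omega) e1.symm
        subst hk1
        rw [show (1:ℕ)+1 = 0+2 by omega] at e2
        exact hxne2 0 e2.symm
      rw [if_neg e1, if_neg e2]
      ring
    · intro hni
      exact absurd (Finset.mem_range.mpr (by omega)) hni
  rw [hy0] at heval
  simp at heval

theorem final_thm {n : ℕ} (d : Fin n → ℕ)
    (hd : ∃ G : SimpleGraph (Fin n), ∀ i, {j | G.Adj i j}.ncard = d i)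
    (h : Fin n → Fin n → ℝ)
    (hh : h ∈ Set.extremePoints ℝ (degreePolytope d)) :
    Even {C : (nonIntegralGraph h).ConnectedComponent |
      ∃ v w, (nonIntegralGraph h).Adj v w ∧
        (nonIntegralGraph h).connectedComponentMk v = C}.ncard := by
  classical
  have hmem : h ∈ degreePolytope d := hh.1
  letI : Fintype (nonIntegralGraph h).ConnectedComponent := Fintype.ofFinite _
  set SF : Finset (nonIntegralGraph h).ConnectedComponent :=
    Finset.univ.filter (fun C => ∃ v w, (nonIntegralGraph h).Adj v w ∧
      (nonIntegralGraph h).connectedComponentMk v = C) with hSF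
  have hset : {C : (nonIntegralGraph h).ConnectedComponent |
      ∃ v w, (nonIntegralGraph h).Adj v w ∧
        (nonIntegralGraph h).connectedComponentMk v = C} = ↑SF := by
    ext C
    rw [hSF]
    simp
  rw [hset, Set.ncard_coe_finset]
  set P : Finset (Fin n × Fin n) :=
    Finset.univ.filter (fun p => p.1 < p.2 ∧ Frac h p.1 p.2) with hPdef
  have hP : ∀ p : Fin n × Fin n, p ∈ P ↔ (p.1 < p.2 ∧ Frac h p.1 p.2) := by
    intro p; rw [hPdef]; simp
  have hfib : P.card = ∑ C ∈ SF,
      (P.filter (fun p => (nonIntegralGraph h).connectedComponentMk p.1 = C)).card := by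
    refine Finset.card_eq_sum_card_fiberwise ?_
    intro p hp
    rw [Finset.mem_coe, hSF, Finset.mem_filter]
    exact ⟨Finset.mem_univ _, p.1, p.2, (adj_iff hmem p.1 p.2).mpr ((hP p).mp hp).2, rfl⟩
  have hodd : ∀ C ∈ SF,
      ((P.filter (fun p => (nonIntegralGraph h).connectedComponentMk p.1 = C)).card) % 2 = 1 := by
    intro C hCmem
    rw [hSF, Finset.mem_filter] at hCmem
    obtain ⟨-, v, w, hadj, hmk⟩ := hCmem
    refine Nat.odd_iff.mp ?_
    exact fiber_odd hh P hP v w ((adj_iff hmem v w).mp hadj) C hmk _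
      (fun p => Finset.mem_filter)
  have hPeven : Even P.card := cardP_even hh hd P hP
  rw [Nat.even_iff] at hPeven
  rw [hfib, Finset.sum_nat_mod, Finset.sum_congr rfl hodd] at hPeven
  rw [Finset.sum_const, smul_eq_mul, mul_one] at hPeven
  rw [Nat.even_iff]
  exact hPeven

end OddCycleAux2

/-- the graph of nonintegrally-labeled pairs at an extreme point of `P(d)`
has an even number of connected components containing at least one edge. -/
theorem extremePoint_even_number_of_odd_cycles {n : ℕ} (d : Fin n → ℕ)
    (hd : Graphic d) (h : Fin n → Fin n → ℝ)
    (hh : h ∈ Set.extremePoints ℝ (degreePolytope d)) :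
    Even {C : (nonIntegralGraph h).ConnectedComponent |
      ∃ v w, (nonIntegralGraph h).Adj v w ∧
        (nonIntegralGraph h).connectedComponentMk v = C}.ncard := by
  exact OddCycleAux2.final_thm d hd h hh
end

section
/- Let d = (d_1, …, d_n) be a graphic list and let g be a point of P(d) such that the graph on vertex set {1,…,n} whose edges are the pairs {i,j} with g_{ij} ∉ {0,1} is a disjoint union of pairwise vertex-disjoint odd cycles (every vertex is incident to zero or exactly two such pairs, and every component with an edge is an odd cycle). Then g is an extreme point of P(d). -/
open Finset

private lemma walk_getVert_eq_support_get {V : Type*} {G : SimpleGraph V} {u v : V}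
    (p : G.Walk u v) (i : ℕ) (h : i < p.support.length) :
    p.support.get ⟨i, h⟩ = p.getVert i := by
  induction p generalizing i with
  | nil =>
    simp only [SimpleGraph.Walk.support_nil, List.length_singleton] at h
    interval_cases i
    simp [SimpleGraph.Walk.getVert_zero]
  | cons hadj q ih =>
    cases i with
    | zero => simp [SimpleGraph.Walk.support_cons, SimpleGraph.Walk.getVert_zero]
    | succ i =>
      simp only [SimpleGraph.Walk.support_cons, List.get_cons_succ,
        SimpleGraph.Walk.getVert_cons_succ]
      exact ih i _

private lemma walk_getVert_eq_tail_get {V : Type*} {G : SimpleGraph V} {u v : V}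
    (p : G.Walk u v) (i : ℕ) (h : i < p.support.tail.length) :
    p.support.tail.get ⟨i, h⟩ = p.getVert (i + 1) := by
  cases p with
  | nil => simp at h
  | cons hadj q =>
    simp only [SimpleGraph.Walk.support_cons, List.tail_cons] at h ⊢
    rw [walk_getVert_eq_support_get q i h, SimpleGraph.Walk.getVert_cons_succ]

private lemma cycle_getVert_inj {V : Type*} {G : SimpleGraph V} {v : V} {c : G.Walk v v}
    (hc : c.IsCycle) {i j : ℕ} (hi1 : 1 ≤ i) (hi2 : i ≤ c.length)
    (hj1 : 1 ≤ j) (hj2 : j ≤ c.length) (h : c.getVert i = c.getVert j) : i = j := by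
  have hnd : c.support.tail.Nodup := hc.support_nodup
  have hlen : c.support.tail.length = c.length := by
    have h1 := c.length_support
    have h2 : c.support.tail.length = c.support.length - 1 := c.support.length_tail
    omega
  have hi : i - 1 < c.support.tail.length := by omega
  have hj : j - 1 < c.support.tail.length := by omega
  have egi : c.support.tail.get ⟨i - 1, hi⟩ = c.getVert i := by
    have := walk_getVert_eq_tail_get c (i - 1) hi
    rwa [show i - 1 + 1 = i by omega] at this
  have egj : c.support.tail.get ⟨j - 1, hj⟩ = c.getVert j := by
    have := walk_getVert_eq_tail_get c (j - 1) hj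
    rwa [show j - 1 + 1 = j by omega] at this
  have : (⟨i - 1, hi⟩ : Fin c.support.tail.length) = ⟨j - 1, hj⟩ :=
    hnd.get_inj_iff.mp (by rw [egi, egj, h])
  have := Fin.mk.injEq _ _ _ _ ▸ this
  omega

/-- a point of `P(d)` whose nonintegrally-labeled pairs form
vertex-disjoint odd cycles is an extreme point of `P(d)`. -/
theorem point_with_odd_cycles_is_extreme {n : ℕ} (d : Fin n → ℕ)
    (hd : Graphic d) (g : Fin n → Fin n → ℝ) (hg : g ∈ degreePolytope d)
    (hdeg : ∀ v, {w | (nonIntegralGraph g).Adj v w}.ncard = 0 ∨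
                 {w | (nonIntegralGraph g).Adj v w}.ncard = 2)
    (hcyc : ∀ v w, (nonIntegralGraph g).Adj v w →
      ∃ c : (nonIntegralGraph g).Walk v v, c.IsCycle ∧ Odd c.length ∧
        ∀ u, (nonIntegralGraph g).Reachable v u ↔ u ∈ c.support) :
    g ∈ Set.extremePoints ℝ (degreePolytope d) := by
  refine ⟨hg, ?_⟩
  rintro x hx y hy hseg
  obtain ⟨a, b, ha, hb, hab, hxy⟩ := hseg
  obtain ⟨hgsymm, hgdiag, hgbox, hgsum⟩ := hg
  -- it suffices to show x = y
  suffices hmain : x = y by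
    subst hmain
    have hgx : g = x := by
      rw [← hxy]; funext i j
      simp only [Pi.add_apply, Pi.smul_apply, smul_eq_mul]
      rw [← add_mul, hab, one_mul]
    exact hgx.symm
  -- the difference x - y vanishes on integrally-labeled pairs
  have hzero : ∀ p q : Fin n, ¬ (nonIntegralGraph g).Adj p q → x p q = y p q := by
    intro p q hna
    rw [nonIntegralGraph, SimpleGraph.fromRel_adj] at hna
    push_neg at hna
    by_cases hpq : p = q
    · subst hpq; rw [hx.2.1, hy.2.1]
    · have h01 : g p q ∈ ({0, 1} : Set ℝ) := (hna hpq).1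
      have hgeq : a * x p q + b * y p q = g p q := by
        have := congrFun (congrFun hxy p) q
        simpa [Pi.add_apply, Pi.smul_apply, smul_eq_mul] using this
      obtain ⟨hx0, hx1⟩ := hx.2.2.1 p q
      obtain ⟨hy0, hy1⟩ := hy.2.2.1 p q
      rcases h01 with h01 | h01 <;> rw [h01] at hgeq
      · have hxz : x p q = 0 := by nlinarith [mul_nonneg hb.le hy0, mul_nonneg ha.le hx0]
        have hyz : y p q = 0 := by nlinarith [mul_nonneg hb.le hy0, mul_nonneg ha.le hx0]
        rw [hxz, hyz]
      · have hxz : x p q = 1 := by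
          nlinarith [mul_nonneg hb.le (sub_nonneg.mpr hy1), mul_nonneg ha.le (sub_nonneg.mpr hx1)]
        have hyz : y p q = 1 := by
          nlinarith [mul_nonneg hb.le (sub_nonneg.mpr hy1), mul_nonneg ha.le (sub_nonneg.mpr hx1)]
        rw [hxz, hyz]
  -- any vertex with a neighbor has exactly the two given neighbors
  have htwo : ∀ u p q : Fin n, (nonIntegralGraph g).Adj u p → (nonIntegralGraph g).Adj u q →
      p ≠ q → ∀ r, (nonIntegralGraph g).Adj u r → r = p ∨ r = q := by
    intro u p q hup huq hpq r hur
    have hfin : {w | (nonIntegralGraph g).Adj u w}.Finite := Set.toFinite _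
    have h2 : {w | (nonIntegralGraph g).Adj u w}.ncard = 2 := by
      rcases hdeg u with h0 | h2
      · exfalso
        have hp : p ∈ {w | (nonIntegralGraph g).Adj u w} := hup
        rw [Set.ncard_eq_zero hfin] at h0
        rw [h0] at hp
        exact hp
      · exact h2
    obtain ⟨s, t, hst, hset⟩ := Set.ncard_eq_two.mp h2
    have hp : p ∈ ({s, t} : Set (Fin n)) := hset ▸ hup
    have hq : q ∈ ({s, t} : Set (Fin n)) := hset ▸ huq
    have hr : r ∈ ({s, t} : Set (Fin n)) := hset ▸ hur
    simp only [Set.mem_insert_iff, Set.mem_singleton_iff] at hp hq hr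
    rcases hp with rfl | rfl <;> rcases hq with rfl | rfl <;> tauto
  -- the basic balance equation at any degree-2 vertex
  have hkey : ∀ u p q : Fin n, (nonIntegralGraph g).Adj u p → (nonIntegralGraph g).Adj u q →
      p ≠ q → (x p u - y p u) + (x q u - y q u) = 0 := by
    intro u p q hup huq hpq
    have hsum0 : ∑ i, (x i u - y i u) = 0 := by
      rw [Finset.sum_sub_distrib, hx.2.2.2 u, hy.2.2.2 u, sub_self]
    have heq : ∑ i, (x i u - y i u) = ∑ i ∈ ({p, q} : Finset (Fin n)), (x i u - y i u) := by
      refine (Finset.sum_subset (Finset.subset_univ _) ?_).symm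
      intro r _ hr
      simp only [Finset.mem_insert, Finset.mem_singleton] at hr
      push_neg at hr
      have hnadj : ¬ (nonIntegralGraph g).Adj r u := by
        intro hadj
        rcases htwo u p q hup huq hpq r hadj.symm with rfl | rfl
        · exact hr.1 rfl
        · exact hr.2 rfl
      rw [hzero r u hnadj, sub_self]
    rw [heq, Finset.sum_pair hpq] at hsum0
    exact hsum0
  -- now prove x i j = y i j for all pairs
  funext i j
  by_cases hadj : (nonIntegralGraph g).Adj i j
  swap
  · exact hzero i j hadj
  obtain ⟨c, hcycle, hLodd, -⟩ := hcyc i j hadj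
  have hL3 : 3 ≤ c.length := hcycle.three_le_length
  set L := c.length with hLdef
  set A : ℕ → ℝ := fun k => x (c.getVert k) (c.getVert (k + 1)) -
      y (c.getVert k) (c.getVert (k + 1)) with hAdef
  have hAstep : ∀ k, k + 2 ≤ L → A (k + 1) = - A k := by
    intro k hk
    have h1 : (nonIntegralGraph g).Adj (c.getVert (k + 1)) (c.getVert k) :=
      (c.adj_getVert_succ (by omega)).symm
    have h2 : (nonIntegralGraph g).Adj (c.getVert (k + 1)) (c.getVert (k + 2)) := by
      have := c.adj_getVert_succ (i := k + 1) (by omega)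
      simpa using this
    have hne : c.getVert k ≠ c.getVert (k + 2) := by
      rcases Nat.eq_zero_or_pos k with rfl | hk0
      · intro he
        have h0 : c.getVert 0 = c.getVert L := by rw [c.getVert_zero, c.getVert_length]
        rw [h0] at he
        have := cycle_getVert_inj hcycle (by omega) (le_refl L) (by omega) (by omega) he
        omega
      · intro he
        have := cycle_getVert_inj hcycle (by omega) (by omega) (by omega) (by omega) he
        omega
    have hbal := hkey (c.getVert (k + 1)) (c.getVert k) (c.getVert (k + 2)) h1 h2 hne
    have hxs := hx.1 (c.getVert (k + 1)) (c.getVert (k + 2))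
    have hys := hy.1 (c.getVert (k + 1)) (c.getVert (k + 2))
    simp only [hAdef]
    rw [show k + 1 + 1 = k + 2 from rfl, hxs, hys]
    linarith
  have hApow : ∀ k, k + 1 ≤ L → A k = (-1 : ℝ) ^ k * A 0 := by
    intro k
    induction k with
    | zero => intro _; simp
    | succ k ih =>
      intro hk
      rw [hAstep k (by omega), ih (by omega)]
      ring
  have hend : A 0 + A (L - 1) = 0 := by
    have h1 : (nonIntegralGraph g).Adj i (c.getVert 1) := by
      have := c.adj_getVert_succ (i := 0) (by omega)
      rwa [c.getVert_zero] at this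
    have h2 : (nonIntegralGraph g).Adj i (c.getVert (L - 1)) := by
      have := c.adj_getVert_succ (i := L - 1) (by omega)
      rw [show L - 1 + 1 = L by omega, c.getVert_length] at this
      exact this.symm
    have hne : c.getVert 1 ≠ c.getVert (L - 1) := by
      intro he
      have := cycle_getVert_inj hcycle (by omega) (by omega) (by omega) (by omega) he
      omega
    have hbal := hkey i (c.getVert 1) (c.getVert (L - 1)) h1 h2 hne
    have e0 : A 0 = x (c.getVert 1) i - y (c.getVert 1) i := by
      simp only [hAdef]
      rw [c.getVert_zero, hx.1 i (c.getVert 1), hy.1 i (c.getVert 1)]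
    have eL : A (L - 1) = x (c.getVert (L - 1)) i - y (c.getVert (L - 1)) i := by
      simp only [hAdef]
      rw [show L - 1 + 1 = L by omega, c.getVert_length]
    rw [e0, eL]
    linarith
  have hA0 : A 0 = 0 := by
    have hev : Even (L - 1) := Nat.Odd.sub_odd hLodd odd_one
    have := hApow (L - 1) (by omega)
    rw [hev.neg_one_pow, one_mul] at this
    linarith
  have h1 : (nonIntegralGraph g).Adj i (c.getVert 1) := by
    have := c.adj_getVert_succ (i := 0) (by omega)
    rwa [c.getVert_zero] at this
  have h2 : (nonIntegralGraph g).Adj i (c.getVert (L - 1)) := by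
    have := c.adj_getVert_succ (i := L - 1) (by omega)
    rw [show L - 1 + 1 = L by omega, c.getVert_length] at this
    exact this.symm
  have hne : c.getVert 1 ≠ c.getVert (L - 1) := by
    intro he
    have := cycle_getVert_inj hcycle (by omega) (by omega) (by omega) (by omega) he
    omega
  rcases htwo i (c.getVert 1) (c.getVert (L - 1)) h1 h2 hne j hadj with rfl | rfl
  · have : A 0 = x i (c.getVert 1) - y i (c.getVert 1) := by
      simp only [hAdef]; rw [c.getVert_zero]
    rw [this] at hA0
    linarith
  · have hALm : A (L - 1) = 0 := by
      have hev : Even (L - 1) := Nat.Odd.sub_odd hLodd odd_one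
      have := hApow (L - 1) (by omega)
      rw [hev.neg_one_pow, one_mul, hA0] at this
      linarith
    have : A (L - 1) = x (c.getVert (L - 1)) i - y (c.getVert (L - 1)) i := by
      simp only [hAdef]
      rw [show L - 1 + 1 = L by omega, c.getVert_length]
    rw [this] at hALm
    have hxs := hx.1 i (c.getVert (L - 1))
    have hys := hy.1 i (c.getVert (L - 1))
    linarith
end

section
/- The class of decisive graphs is hereditary: if G is a decisive simple graph (i.e., the degree sequence of G is a decisive sequence) and H is an induced subgraph of G, then H is decisive. -/
open Finset

open Classical in
lemma indSum {k : ℕ} (K : SimpleGraph (Fin k)) (j : Fin k) :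
    ∑ i, (if K.Adj i j then (1:ℝ) else 0) = ({i | K.Adj j i}.ncard : ℝ) := by
  classical
  rw [Finset.sum_boole]
  norm_cast
  rw [Set.ncard_eq_toFinset_card']
  congr 1
  ext i
  simp [K.adj_comm]

lemma seg01 {t s a b c : ℝ} (ht : 0 < t) (hs : 0 < s) (hts : t + s = 1)
    (ha0 : 0 ≤ a) (ha1 : a ≤ 1) (hb0 : 0 ≤ b) (hb1 : b ≤ 1)
    (heq : t * a + s * b = c) (hc : c = 0 ∨ c = 1) : a = c ∧ b = c := by
  rcases hc with rfl | rfl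
  · constructor <;> nlinarith [mul_nonneg ht.le ha0, mul_nonneg hs.le hb0]
  · constructor <;> nlinarith [mul_le_of_le_one_right ht.le ha1,
      mul_le_of_le_one_right hs.le hb1]

/-- decisive graphs form a hereditary class. -/
theorem decisive_hereditary {n m : ℕ} (G : SimpleGraph (Fin n)) (H : SimpleGraph (Fin m))
    (hemb : Nonempty (H ↪g G))
    (hG : Decisive fun i => {j | G.Adj i j}.ncard) :
    Decisive fun i => {j | H.Adj i j}.ncard := by
  classical
  obtain ⟨f⟩ := hemb
  intro x hx i0 j0
  set dH : Fin m → ℕ := fun i => {j | H.Adj i j}.ncard with hdHdef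
  set dG : Fin n → ℕ := fun i => {j | G.Adj i j}.ncard with hdGdef
  obtain ⟨hxP, hxExt⟩ := hx
  obtain ⟨hsym, hdiag, hbd, hrow⟩ := hxP
  set z : Fin n → Fin n → ℝ := fun i j => if G.Adj i j then (1:ℝ) else 0 with hzdef
  have hz01 : ∀ i j, z i j = 0 ∨ z i j = 1 := by
    intro i j; by_cases h : G.Adj i j <;> simp [hzdef, h]
  have hzsym : ∀ i j, z i j = z j i := by
    intro i j; simp only [hzdef]; rw [G.adj_comm]
  have hzrow : ∀ j, ∑ i, z i j = (dG j : ℝ) := fun j => indSum G j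
  set y : Fin n → Fin n → ℝ := fun i j =>
    if hi : ∃ a, f a = i then
      if hj : ∃ b, f b = j then x hi.choose hj.choose else z i j
    else z i j with hydef
  have key : ∀ a b, y (f a) (f b) = x a b := by
    intro a b
    have ha : ∃ a', f a' = f a := ⟨a, rfl⟩
    have hb : ∃ b', f b' = f b := ⟨b, rfl⟩
    have ea : ha.choose = a := f.injective ha.choose_spec
    have eb : hb.choose = b := f.injective hb.choose_spec
    simp only [hydef, dif_pos ha, dif_pos hb, ea, eb]
  have youter : ∀ i j, ((¬∃ a, f a = i) ∨ (¬∃ b, f b = j)) → y i j = z i j := by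
    intro i j h
    rcases h with h | h
    · simp only [hydef, dif_neg h]
    · by_cases hi : ∃ a, f a = i
      · simp only [hydef, dif_pos hi, dif_neg h]
      · simp only [hydef, dif_neg hi]
  set sIm : Finset (Fin n) := Finset.univ.map f.toEmbedding with hsImdef
  have memIm : ∀ i : Fin n, i ∈ sIm ↔ ∃ a, f a = i := by
    intro i; simp [hsImdef]
  have hinSum : ∀ b : Fin m, ∑ i ∈ sIm, y i (f b) = (dH b : ℝ) := by
    intro b
    rw [hsImdef, Finset.sum_map]
    have h1 : ∀ a : Fin m, y (f.toEmbedding a) (f b) = x a b := by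
      intro a
      have : f.toEmbedding a = f a := rfl
      rw [this, key]
    rw [Finset.sum_congr rfl (fun a _ => h1 a)]
    exact hrow b
  have hzinSum : ∀ b : Fin m, ∑ i ∈ sIm, z i (f b) = (dH b : ℝ) := by
    intro b
    rw [hsImdef, Finset.sum_map]
    have h1 : ∀ a : Fin m, z (f.toEmbedding a) (f b) = if H.Adj a b then (1:ℝ) else 0 := by
      intro a
      have h2 : f.toEmbedding a = f a := rfl
      simp only [hzdef, h2]
      congr 1
      simp only [eq_iff_iff]
      exact f.map_rel_iff
    rw [Finset.sum_congr rfl (fun a _ => h1 a)]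
    exact indSum H b
  have houterSum : ∀ b : Fin m, ∑ i ∈ sImᶜ, y i (f b) = (dG (f b) : ℝ) - dH b := by
    intro b
    have h1 : ∑ i ∈ sImᶜ, y i (f b) = ∑ i ∈ sImᶜ, z i (f b) :=
      Finset.sum_congr rfl (fun i hi =>
        youter _ _ (Or.inl (by simpa [memIm] using (Finset.mem_compl.mp hi))))
    have h2 := Finset.sum_add_sum_compl sIm (fun i => z i (f b))
    rw [hzrow, hzinSum b] at h2
    rw [h1]; linarith
  have hysum : ∀ j, ∑ i, y i j = (dG j : ℝ) := by
    intro j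
    by_cases hj : ∃ b, f b = j
    · obtain ⟨b, rfl⟩ := hj
      rw [← Finset.sum_add_sum_compl sIm (fun i => y i (f b)), hinSum b, houterSum b]
      ring
    · have h1 : ∑ i, y i j = ∑ i, z i j :=
        Finset.sum_congr rfl (fun i _ => youter _ _ (Or.inr hj))
      rw [h1]; exact hzrow j
  have hy01bd : ∀ i j, 0 ≤ y i j ∧ y i j ≤ 1 := by
    intro i j
    by_cases hi : ∃ a, f a = i
    · by_cases hj : ∃ b, f b = j
      · obtain ⟨a, rfl⟩ := hi; obtain ⟨b, rfl⟩ := hj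
        rw [key]; exact hbd a b
      · rw [youter _ _ (Or.inr hj)]
        rcases hz01 i j with h | h <;> rw [h] <;> norm_num
    · rw [youter _ _ (Or.inl hi)]
      rcases hz01 i j with h | h <;> rw [h] <;> norm_num
  have hyP : y ∈ degreePolytope dG := by
    refine ⟨?_, ?_, hy01bd, hysum⟩
    · intro i j
      by_cases hi : ∃ a, f a = i
      · by_cases hj : ∃ b, f b = j
        · obtain ⟨a, rfl⟩ := hi; obtain ⟨b, rfl⟩ := hj
          rw [key, key]; exact hsym a b
        · rw [youter _ _ (Or.inr hj), youter _ _ (Or.inl hj), hzsym]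
      · rw [youter _ _ (Or.inl hi), youter _ _ (Or.inr hi), hzsym]
    · intro i
      by_cases hi : ∃ a, f a = i
      · obtain ⟨a, rfl⟩ := hi; rw [key]; exact hdiag a
      · rw [youter _ _ (Or.inl hi)]
        simp [hzdef]
  have yext : y ∈ Set.extremePoints ℝ (degreePolytope dG) := by
    refine ⟨hyP, ?_⟩
    intro y1 h1 y2 h2 hseg
    obtain ⟨t, s, ht, hs, hts, heq⟩ := hseg
    obtain ⟨h1sym, h1diag, h1bd, h1row⟩ := h1
    obtain ⟨h2sym, h2diag, h2bd, h2row⟩ := h2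
    have hpt : ∀ i j, t * y1 i j + s * y2 i j = y i j := by
      intro i j
      have := congrFun (congrFun heq i) j
      simpa using this
    have hint : ∀ i j, (y i j = 0 ∨ y i j = 1) → y1 i j = y i j ∧ y2 i j = y i j := by
      intro i j hij
      exact seg01 ht hs hts (h1bd i j).1 (h1bd i j).2 (h2bd i j).1 (h2bd i j).2
        (hpt i j) hij
    set x1 : Fin m → Fin m → ℝ := fun a b => y1 (f a) (f b) with hx1def
    set x2 : Fin m → Fin m → ℝ := fun a b => y2 (f a) (f b) with hx2def
    have hrow1 : ∀ (w : Fin n → Fin n → ℝ), (∀ j, ∑ i, w i j = (dG j : ℝ)) →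
        (∀ i j, (y i j = 0 ∨ y i j = 1) → w i j = y i j) →
        ∀ b : Fin m, ∑ a, w (f a) (f b) = (dH b : ℝ) := by
      intro w hwrow hwint b
      have hcomp : ∑ i ∈ sImᶜ, w i (f b) = ∑ i ∈ sImᶜ, y i (f b) := by
        refine Finset.sum_congr rfl (fun i hi => ?_)
        have hni : ¬∃ a, f a = i := by simpa [memIm] using (Finset.mem_compl.mp hi)
        have hz := youter i (f b) (Or.inl hni)
        exact hwint i (f b) (hz ▸ hz01 i (f b))
      have htot := Finset.sum_add_sum_compl sIm (fun i => w i (f b))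
      rw [hwrow (f b)] at htot
      have hins : ∑ i ∈ sIm, w i (f b) = ∑ a, w (f a) (f b) := by
        rw [hsImdef, Finset.sum_map]; rfl
      rw [hcomp, houterSum b, hins] at htot
      linarith
    have hx1P : x1 ∈ degreePolytope dH := by
      refine ⟨fun a b => h1sym (f a) (f b), fun a => h1diag (f a),
        fun a b => h1bd (f a) (f b), ?_⟩
      intro b
      exact hrow1 y1 h1row (fun i j h => (hint i j h).1) b
    have hx2P : x2 ∈ degreePolytope dH := by
      refine ⟨fun a b => h2sym (f a) (f b), fun a => h2diag (f a),
        fun a b => h2bd (f a) (f b), ?_⟩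
      intro b
      exact hrow1 y2 h2row (fun i j h => (hint i j h).2) b
    have hxseg : x ∈ openSegment ℝ x1 x2 := by
      refine ⟨t, s, ht, hs, hts, ?_⟩
      funext a b
      have := hpt (f a) (f b)
      rw [key] at this
      simpa using this
    have hx1 := hxExt hx1P hx2P hxseg
    have hx2 := hxExt hx2P hx1P (by rw [openSegment_symm]; exact hxseg)
    suffices hboth : y1 = y ∧ y2 = y from hboth.1
    constructor
    · funext i j
      by_cases hi : ∃ a, f a = i
      · by_cases hj : ∃ b, f b = j
        · obtain ⟨a, rfl⟩ := hi; obtain ⟨b, rfl⟩ := hj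
          have : x1 a b = x a b := by rw [hx1]
          rw [key]
          exact this
        · have hz := youter i j (Or.inr hj)
          exact (hint i j (hz ▸ hz01 i j)).1
      · have hz := youter i j (Or.inl hi)
        exact (hint i j (hz ▸ hz01 i j)).1
    · funext i j
      by_cases hi : ∃ a, f a = i
      · by_cases hj : ∃ b, f b = j
        · obtain ⟨a, rfl⟩ := hi; obtain ⟨b, rfl⟩ := hj
          have : x2 a b = x a b := by rw [hx2]
          rw [key]
          exact this
        · have hz := youter i j (Or.inr hj)
          exact (hint i j (hz ▸ hz01 i j)).2
      · have hz := youter i j (Or.inl hi)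
        exact (hint i j (hz ▸ hz01 i j)).2
  have := hG y yext (f i0) (f j0)
  rwa [key] at this
end
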